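/- arXiv:2006.10076 — 4 statements merged into one kernel-verified Lean document; each statement's English description precedes it below -/
import Mathlib

section
/- Let P ⊂ ℝ^d be a rational d-polytope and let T be a triangulation of P with denominator q. Then the Ehrhart series of P satisfies Ehr(P;z) = (Σ_{Ω ∈ T} B(Ω;z) · h_T(Ω;z^q)) / (1 − z^q)^{d+1}, where the sum is over all faces Ω of T including the empty face. -/
open scoped BigOperators Pointwise

namespace RationalEhrhart

/-- A point of `ℝ^m` is a lattice point if all its coordinates are integers. -/
def IsLatticePt {m : ℕ} (v : Fin m → ℝ) : Prop := ∀ i, ∃ n : ℤ, v i = (n : ℝ)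

/-- Lattice points of `ℝ^d × ℝ = ℝ^{d+1}`. -/
def IsLatticePtC {d : ℕ} (p : (Fin d → ℝ) × ℝ) : Prop :=
  (∀ i, ∃ n : ℤ, p.1 i = (n : ℝ)) ∧ ∃ n : ℤ, p.2 = (n : ℝ)

/-- `P` is a polytope: the convex hull of finitely many points. -/
def IsPolytope {d : ℕ} (P : Set (Fin d → ℝ)) : Prop :=
  ∃ V : Finset (Fin d → ℝ), P = convexHull ℝ (V : Set (Fin d → ℝ))

/-- `P` is a rational polytope: the convex hull of finitely many rational points. -/
def IsRationalPolytope {d : ℕ} (P : Set (Fin d → ℝ)) : Prop :=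
  ∃ V : Finset (Fin d → ℝ), (∀ v ∈ V, ∀ i, ∃ r : ℚ, v i = (r : ℝ)) ∧
    P = convexHull ℝ (V : Set (Fin d → ℝ))

/-- `P` is a lattice polytope: the convex hull of finitely many lattice points. -/
def IsLatticePolytope {d : ℕ} (P : Set (Fin d → ℝ)) : Prop :=
  ∃ V : Finset (Fin d → ℝ), (∀ v ∈ V, IsLatticePt v) ∧
    P = convexHull ℝ (V : Set (Fin d → ℝ))

/-- `q` clears all coordinate denominators of every point of `S`. -/
def ClearsDenoms {d : ℕ} (q : ℕ) (S : Set (Fin d → ℝ)) : Prop :=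
  ∀ v ∈ S, ∀ i, ∃ n : ℤ, (q : ℝ) * v i = (n : ℝ)

/-- `q` is the denominator (the lcm of all coordinate denominators) of the points of `S`. -/
def IsDenominator {d : ℕ} (q : ℕ) (S : Set (Fin d → ℝ)) : Prop :=
  0 < q ∧ ClearsDenoms q S ∧ ∀ q' : ℕ, 0 < q' → ClearsDenoms q' S → q ∣ q'

/-- The number of lattice points in the `t`-th dilate of `P`. -/
noncomputable def latticeCount {d : ℕ} (P : Set (Fin d → ℝ)) (t : ℕ) : ℕ :=
  Set.ncard {v : Fin d → ℝ | v ∈ (t : ℝ) • P ∧ IsLatticePt v}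

/-- The Ehrhart series `Ehr(P;z) = ∑_{t ≥ 0} #(tP ∩ ℤ^d) z^t` of `P`. -/
noncomputable def ehr {d : ℕ} (P : Set (Fin d → ℝ)) : PowerSeries ℤ :=
  PowerSeries.mk fun t => (latticeCount P t : ℤ)

/-- The integral generator `(q·v, q)` at height `q` of the ray through `(v,1)`. -/
def rayGen {d : ℕ} (q : ℕ) (v : Fin d → ℝ) : (Fin d → ℝ) × ℝ := ((q : ℝ) • v, (q : ℝ))

/-- The open parallelepiped (box) spanned by the height-`q` ray generators of the face
with vertex set `Ω`. -/
def faceBox {d : ℕ} (q : ℕ) (Ω : Finset (Fin d → ℝ)) : Set ((Fin d → ℝ) × ℝ) :=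
  {p | ∃ lam : (Fin d → ℝ) → ℝ, (∀ v ∈ Ω, 0 < lam v ∧ lam v < 1) ∧
        p = ∑ v ∈ Ω, lam v • rayGen q v}

/-- The open parallelepiped spanned by the height-`q` ray generators of the face with
vertex set `Ω` together with one extra generator `w` (the interior direction `(a,ℓ)`). -/
def faceBoxA {d : ℕ} (q : ℕ) (w : (Fin d → ℝ) × ℝ) (Ω : Finset (Fin d → ℝ)) :
    Set ((Fin d → ℝ) × ℝ) :=
  {p | ∃ (lam : (Fin d → ℝ) → ℝ) (c : ℝ), (∀ v ∈ Ω, 0 < lam v ∧ lam v < 1) ∧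
        0 < c ∧ c < 1 ∧ p = (∑ v ∈ Ω, lam v • rayGen q v) + c • w}

/-- The generating function `∑_{p ∈ S ∩ ℤ^{d+1}} z^{u(p)}` of the last coordinates of the
lattice points of `S ⊆ ℝ^{d+1}`, as a polynomial (for `S` with nonnegative heights). -/
noncomputable def genPoly {d : ℕ} (S : Set ((Fin d → ℝ) × ℝ)) : Polynomial ℤ :=
  ∑ᶠ p ∈ {p | p ∈ S ∧ IsLatticePtC p}, Polynomial.X ^ (⌊p.2⌋.toNat)

/-- The generating function `∑_{p ∈ S ∩ ℤ^{d+1}} z^{u(p)}` as a Laurent polynomial. -/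
noncomputable def genLaurent {d : ℕ} (S : Set ((Fin d → ℝ) × ℝ)) : LaurentPolynomial ℤ :=
  ∑ᶠ p ∈ {p | p ∈ S ∧ IsLatticePtC p}, LaurentPolynomial.T ⌊p.2⌋

/-- The generating function `∑_{p ∈ S ∩ ℤ^{d+1}} z^{-u(p)}`, i.e. the substitution
`z ↦ 1/z` applied to `genLaurent S`. -/
noncomputable def genLaurentInv {d : ℕ} (S : Set ((Fin d → ℝ) × ℝ)) : LaurentPolynomial ℤ :=
  ∑ᶠ p ∈ {p | p ∈ S ∧ IsLatticePtC p}, LaurentPolynomial.T (-⌊p.2⌋)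

/-- The box polynomial `B(Ω;z)` of a face `Ω` (with respect to height `q`);
note `boxPoly q ∅ = 1`. -/
noncomputable def boxPoly {d : ℕ} (q : ℕ) (Ω : Finset (Fin d → ℝ)) : Polynomial ℤ :=
  genPoly (faceBox q Ω)

/-- The box polynomial `B(Ω';z)` of a face `Ω` augmented by the generator `w = (a,ℓ)`. -/
noncomputable def boxPolyA {d : ℕ} (q : ℕ) (w : (Fin d → ℝ) × ℝ) (Ω : Finset (Fin d → ℝ)) :
    Polynomial ℤ :=
  genPoly (faceBoxA q w Ω)

/-- The `h`-polynomial of the face `Ω` in the simplicial complex with face set `K`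
(which should contain the empty face), triangulating a polytope of dimension `D`:
`h(Ω;z) = (1−z)^{D−dim Ω} ∑_{Ω ⊆ Φ ∈ K} (z/(1−z))^{dim Φ − dim Ω}
        = ∑_{Ω ⊆ Φ ∈ K} z^{#Φ − #Ω} (1−z)^{D+1−#Φ}`, where `dim Φ = #Φ − 1`. -/
noncomputable def hPoly {d : ℕ} (D : ℕ) (K : Set (Finset (Fin d → ℝ)))
    (Ω : Finset (Fin d → ℝ)) : Polynomial ℤ :=
  ∑ᶠ Φ ∈ {Φ | Φ ∈ K ∧ Ω ⊆ Φ},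
    Polynomial.X ^ (Φ.card - Ω.card) * (1 - Polynomial.X) ^ (D + 1 - Φ.card)

/-- The face set of a simplicial complex, together with the empty face. -/
def facesE {d : ℕ} (K : Geometry.SimplicialComplex ℝ (Fin d → ℝ)) :
    Set (Finset (Fin d → ℝ)) :=
  insert ∅ K.faces

/-- Extended coefficient function of a polynomial, defined for all integer indices. -/
noncomputable def coeffZ (p : Polynomial ℤ) (m : ℤ) : ℤ :=
  if 0 ≤ m then p.coeff m.toNat else 0

/-- `p(z) = z^N · p(1/z)` as an identity of Laurent polynomials, expressed through
coefficients: the coefficient of `z^m` on the left is `coeffZ p m`, on the right it is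
`coeffZ p (N−m)`. -/
def IsPalin (N : ℤ) (p : Polynomial ℤ) : Prop :=
  ∀ m : ℤ, coeffZ p m = coeffZ p (N - m)

/-- The polar dual polytope `P* = {y : ⟨y,x⟩ ≤ 1 for all x ∈ P}`. -/
def polarDual {d : ℕ} (P : Set (Fin d → ℝ)) : Set (Fin d → ℝ) :=
  {y | ∀ x ∈ P, ∑ i, y i * x i ≤ 1}


/-! ### Auxiliary machinery -/

open scoped Classical

section Aux

variable {d : ℕ}

lemma latC_add {p r : (Fin d → ℝ) × ℝ} (hp : IsLatticePtC p) (hr : IsLatticePtC r) :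
    IsLatticePtC (p + r) := by
  obtain ⟨h1, n, hn⟩ := hp
  obtain ⟨h2, m, hm⟩ := hr
  refine ⟨fun i => ?_, ⟨n + m, ?_⟩⟩
  · obtain ⟨a, ha⟩ := h1 i
    obtain ⟨b, hb⟩ := h2 i
    exact ⟨a + b, by show p.1 i + r.1 i = ((a + b : ℤ) : ℝ); rw [ha, hb]; push_cast; ring⟩
  · show p.2 + r.2 = ((n + m : ℤ) : ℝ)
    rw [hn, hm]; push_cast; ring

lemma latC_neg {p : (Fin d → ℝ) × ℝ} (hp : IsLatticePtC p) : IsLatticePtC (-p) := by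
  obtain ⟨h1, n, hn⟩ := hp
  refine ⟨fun i => ?_, ⟨-n, ?_⟩⟩
  · obtain ⟨a, ha⟩ := h1 i
    exact ⟨-a, by show -(p.1 i) = ((-a : ℤ) : ℝ); rw [ha]; push_cast; ring⟩
  · show -(p.2) = ((-n : ℤ) : ℝ); rw [hn]; push_cast; ring

lemma latC_sub {p r : (Fin d → ℝ) × ℝ} (hp : IsLatticePtC p) (hr : IsLatticePtC r) :
    IsLatticePtC (p - r) := by
  rw [sub_eq_add_neg]; exact latC_add hp (latC_neg hr)

lemma latC_zero : IsLatticePtC (0 : (Fin d → ℝ) × ℝ) :=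
  ⟨fun _ => ⟨0, by simp⟩, ⟨0, by simp⟩⟩

lemma latC_nat_smul {p : (Fin d → ℝ) × ℝ} (hp : IsLatticePtC p) (k : ℕ) :
    IsLatticePtC ((k : ℝ) • p) := by
  obtain ⟨h1, n, hn⟩ := hp
  refine ⟨fun i => ?_, ⟨k * n, ?_⟩⟩
  · obtain ⟨a, ha⟩ := h1 i
    exact ⟨k * a, by show (k : ℝ) • (p.1 i) = ((k * a : ℤ) : ℝ); rw [smul_eq_mul, ha]; push_cast; ring⟩
  · show (k : ℝ) • p.2 = ((k * n : ℤ) : ℝ); rw [smul_eq_mul, hn]; push_cast; ring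

lemma latC_sum {ι : Type*} (F : Finset ι) (f : ι → (Fin d → ℝ) × ℝ)
    (h : ∀ i ∈ F, IsLatticePtC (f i)) : IsLatticePtC (∑ i ∈ F, f i) := by
  classical
  induction F using Finset.induction_on with
  | empty => simpa using latC_zero
  | insert _ _ ha ih =>
    rw [Finset.sum_insert ha]
    exact latC_add (h _ (Finset.mem_insert_self _ _))
      (ih fun i hi => h i (Finset.mem_insert_of_mem hi))

lemma latC_rayGen {q : ℕ} {v : Fin d → ℝ} (hv : ∀ i, ∃ n : ℤ, (q : ℝ) * v i = n) :
    IsLatticePtC (rayGen q v) := by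
  refine ⟨fun i => ?_, ⟨q, by simp [rayGen]⟩⟩
  obtain ⟨n, hn⟩ := hv i
  exact ⟨n, by show (q : ℝ) • v i = (n : ℝ); rw [smul_eq_mul, hn]⟩

/-- Disjoint finite unions and `ncard`. -/
lemma ncard_partition {ι α : Type*} (F : Finset ι) (T : ι → Set α)
    (hfin : ∀ i ∈ F, (T i).Finite)
    (hdisj : ∀ i ∈ F, ∀ j ∈ F, i ≠ j → Disjoint (T i) (T j)) :
    (⋃ i ∈ F, T i).ncard = ∑ i ∈ F, (T i).ncard := by
  classical
  induction F using Finset.induction_on with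
  | empty => simp
  | @insert a s ha ih =>
    have hU : (⋃ x ∈ s, T x).Finite := by
      apply Set.Finite.biUnion s.finite_toSet
      intro i hi
      exact hfin i (Finset.mem_insert_of_mem hi)
    have hdis : Disjoint (T a) (⋃ x ∈ s, T x) := by
      rw [Set.disjoint_iUnion₂_right]
      intro i hi
      exact hdisj a (Finset.mem_insert_self _ _) i (Finset.mem_insert_of_mem hi)
        (fun h => ha (h ▸ hi))
    rw [Finset.set_biUnion_insert, Finset.sum_insert ha,
      Set.ncard_union_eq hdis (hfin a (Finset.mem_insert_self _ _)) hU,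
      ih (fun i hi => hfin i (Finset.mem_insert_of_mem hi))
        (fun i hi j hj hij =>
          hdisj i (Finset.mem_insert_of_mem hi) j (Finset.mem_insert_of_mem hj) hij)]

/-- A bounded set of lattice points in `ℝ^d` is finite. -/
lemma finite_of_lattice_bounded {S : Set (Fin d → ℝ)} (R : ℝ)
    (hb : ∀ x ∈ S, ∀ i, |x i| ≤ R) (hl : ∀ x ∈ S, IsLatticePt x) : S.Finite := by
  classical
  have key : S ⊆ (fun n : Fin d → ℤ => fun i => (n i : ℝ)) ''
      (Set.univ.pi fun _ : Fin d => Set.Icc (-⌈R⌉) ⌈R⌉) := by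
    intro x hx
    choose n hn using hl x hx
    refine ⟨n, fun i _ => ?_, funext fun i => (hn i).symm⟩
    have h1 := hb x hx i
    rw [hn i] at h1
    obtain ⟨h2, h3⟩ := abs_le.mp h1
    constructor
    · have : ((-⌈R⌉ : ℤ) : ℝ) ≤ (n i : ℝ) := by
        push_cast
        calc (-(⌈R⌉ : ℝ)) ≤ -R := by simpa using Int.le_ceil R
        _ ≤ (n i : ℝ) := h2
      exact_mod_cast this
    · have : ((n i : ℤ) : ℝ) ≤ ((⌈R⌉ : ℤ) : ℝ) := le_trans h3 (Int.le_ceil R)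
      exact_mod_cast this
  exact Set.Finite.subset (Set.Finite.image _ (Set.Finite.pi fun _ => Set.finite_Icc _ _)) key

/-- A bounded set of lattice points in `ℝ^d × ℝ` is finite. -/
lemma finite_of_latticeC_bounded {S : Set ((Fin d → ℝ) × ℝ)} (R : ℝ)
    (hb : ∀ p ∈ S, (∀ i, |p.1 i| ≤ R) ∧ |p.2| ≤ R) (hl : ∀ p ∈ S, IsLatticePtC p) :
    S.Finite := by
  classical
  have key : S ⊆ (fun nm : (Fin d → ℤ) × ℤ => ((fun i => ((nm.1 i : ℤ) : ℝ)), ((nm.2 : ℤ) : ℝ))) ''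
      ((Set.univ.pi fun _ : Fin d => Set.Icc (-⌈R⌉) ⌈R⌉) ×ˢ Set.Icc (-⌈R⌉) ⌈R⌉) := by
    intro p hp
    obtain ⟨h1, m, hm⟩ := hl p hp
    choose n hn using h1
    obtain ⟨hbb, hb2⟩ := hb p hp
    have hcast : ∀ z : ℤ, ∀ r : ℝ, r = (z : ℝ) → |r| ≤ R → -⌈R⌉ ≤ z ∧ z ≤ ⌈R⌉ := by
      intro z r hrz hrR
      rw [hrz] at hrR
      obtain ⟨h2, h3⟩ := abs_le.mp hrR
      constructor
      · have : ((-⌈R⌉ : ℤ) : ℝ) ≤ (z : ℝ) := by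
          push_cast
          calc (-(⌈R⌉ : ℝ)) ≤ -R := by simpa using Int.le_ceil R
          _ ≤ (z : ℝ) := h2
        exact_mod_cast this
      · have : ((z : ℤ) : ℝ) ≤ ((⌈R⌉ : ℤ) : ℝ) := le_trans h3 (Int.le_ceil R)
        exact_mod_cast this
    refine ⟨(n, m), ⟨fun i _ => ?_, ?_⟩, ?_⟩
    · exact Set.mem_Icc.mpr (hcast (n i) (p.1 i) (hn i) (hbb i))
    · exact Set.mem_Icc.mpr (hcast m p.2 hm hb2)
    · exact Prod.ext (funext fun i => (hn i).symm) hm.symm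
  exact Set.Finite.subset (Set.Finite.image _
    (Set.Finite.prod (Set.Finite.pi fun _ => Set.finite_Icc _ _) (Set.finite_Icc _ _))) key

/-- The geometric series `∑_n z^{qn}`. -/
noncomputable def G (q : ℕ) : PowerSeries ℤ :=
  PowerSeries.mk fun t => if q ∣ t then 1 else 0

lemma one_sub_X_pow_mul_G {q : ℕ} (hq : 0 < q) : (1 - PowerSeries.X ^ q) * G q = 1 := by
  ext t
  rw [sub_mul, one_mul, map_sub, PowerSeries.coeff_X_pow_mul' (G q) q t, PowerSeries.coeff_one]
  simp only [G, PowerSeries.coeff_mk]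
  rcases Nat.eq_zero_or_pos t with rfl | ht
  · have : ¬ (q ≤ 0) := by omega
    simp [this]
  · have ht0 : ¬ (t = 0) := by omega
    by_cases hle : q ≤ t
    · have hiff : q ∣ t ↔ q ∣ t - q := by
        constructor
        · intro h; exact Nat.dvd_sub h dvd_rfl
        · intro h
          have := Nat.sub_add_cancel hle
          calc q ∣ (t - q) + q := dvd_add h dvd_rfl
          _ = t := this
      rw [if_pos hle, if_neg ht0]
      by_cases hd : q ∣ t
      · rw [if_pos hd, if_pos (hiff.mp hd)]; ring
      · rw [if_neg hd, if_neg (fun h => hd (hiff.mpr h))]; ring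
    · have hnd : ¬ q ∣ t := by
        intro h
        exact hle (Nat.le_of_dvd ht h)
      rw [if_neg hle, if_neg ht0, if_neg hnd]; ring

lemma coeff_mul_G {q : ℕ} (hq : 0 < q) (f : PowerSeries ℤ) (t : ℕ) :
    PowerSeries.coeff t (f * G q) =
      ∑ j ∈ Finset.range (t / q + 1), PowerSeries.coeff (t - q * j) f := by
  rw [mul_comm, PowerSeries.coeff_mul, Finset.Nat.sum_antidiagonal_eq_sum_range_succ_mk]
  simp only [G, PowerSeries.coeff_mk, ite_mul, one_mul, zero_mul]
  rw [← Finset.sum_filter]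
  refine Finset.sum_nbij' (fun k => k / q) (fun j => q * j) ?_ ?_ ?_ ?_ ?_
  · intro k hk
    rw [Finset.mem_filter, Finset.mem_range] at hk
    rw [Finset.mem_range]
    show k / q < t / q + 1
    have := Nat.div_le_div_right (c := q) (Nat.lt_succ_iff.mp hk.1)
    omega
  · intro j hj
    rw [Finset.mem_range] at hj
    rw [Finset.mem_filter, Finset.mem_range]
    show q * j < t + 1 ∧ q ∣ q * j
    refine ⟨Nat.lt_succ_of_le ?_, Dvd.intro j rfl⟩
    rw [mul_comm]
    exact (Nat.le_div_iff_mul_le hq).mp (Nat.lt_succ_iff.mp hj)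
  · intro k hk
    rw [Finset.mem_filter] at hk
    show q * (k / q) = k
    exact Nat.mul_div_cancel' hk.2
  · intro j _
    show q * j / q = j
    exact Nat.mul_div_cancel_left j hq
  · intro k hk
    rw [Finset.mem_filter] at hk
    show PowerSeries.coeff (t - k) f = PowerSeries.coeff (t - q * (k / q)) f
    rw [Nat.mul_div_cancel' hk.2]

/-- Coordinates of points of a finite set are uniformly bounded. -/
lemma exists_coord_bound (Φ : Finset (Fin d → ℝ)) :
    ∃ C : ℝ, 0 ≤ C ∧ ∀ v ∈ Φ, ∀ i, |v i| ≤ C := by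
  refine ⟨∑ v ∈ Φ, ∑ i, |v i|, by positivity, fun v hv i => ?_⟩
  calc |v i| ≤ ∑ i, |v i| :=
        Finset.single_le_sum (fun j _ => abs_nonneg (v j)) (Finset.mem_univ i)
  _ ≤ ∑ v ∈ Φ, ∑ i, |v i| :=
        Finset.single_le_sum (f := fun v => ∑ i, |v i|)
          (fun w _ => by positivity) hv

/-- Unique representation for affinely independent vertex sets. -/
lemma rep_eq {Φ : Finset (Fin d → ℝ)} (hΦ : AffineIndependent ℝ ((↑) : ↑Φ → (Fin d → ℝ)))
    {a b : (Fin d → ℝ) → ℝ} (hsum : ∑ v ∈ Φ, a v = ∑ v ∈ Φ, b v)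
    (hvec : ∑ v ∈ Φ, a v • v = ∑ v ∈ Φ, b v • v) : ∀ v ∈ Φ, a v = b v := by
  have H := affineIndependent_iff.mp hΦ Finset.univ (fun v => a ↑v - b ↑v)
  have h1 : ∑ e : ↑Φ, (a ↑e - b ↑e) = 0 := by
    rw [Finset.sum_sub_distrib, Finset.sum_coe_sort Φ a, Finset.sum_coe_sort Φ b, hsum, sub_self]
  have h2 : ∑ e : ↑Φ, (a ↑e - b ↑e) • (e : Fin d → ℝ) = 0 := by
    have : ∀ e : ↑Φ, (a ↑e - b ↑e) • (e : Fin d → ℝ) = a ↑e • ↑e - b ↑e • ↑e :=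
      fun e => sub_smul _ _ _
    rw [Finset.sum_congr rfl fun e _ => this e, Finset.sum_sub_distrib,
      Finset.sum_coe_sort Φ (fun v => a v • v), Finset.sum_coe_sort Φ (fun v => b v • v),
      hvec, sub_self]
  intro v hv
  have := H h1 h2 ⟨v, hv⟩ (Finset.mem_univ _)
  linarith [this]

/-- Unique representation in the cone over a simplex. -/
lemma repC_eq {q : ℕ} (hq : 0 < q) {Φ : Finset (Fin d → ℝ)}
    (hΦ : AffineIndependent ℝ ((↑) : ↑Φ → (Fin d → ℝ)))
    {μ ν : (Fin d → ℝ) → ℝ}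
    (h : ∑ v ∈ Φ, μ v • rayGen q v = ∑ v ∈ Φ, ν v • rayGen q v) : ∀ v ∈ Φ, μ v = ν v := by
  have hqne : (q : ℝ) ≠ 0 := Nat.cast_ne_zero.mpr hq.ne'
  have hsnd : ∑ v ∈ Φ, (q : ℝ) * μ v = ∑ v ∈ Φ, (q : ℝ) * ν v := by
    have h2 := congrArg Prod.snd h
    rw [Prod.snd_sum, Prod.snd_sum] at h2
    simpa [rayGen, smul_eq_mul, mul_comm] using h2
  have hfst : ∑ v ∈ Φ, ((q : ℝ) * μ v) • v = ∑ v ∈ Φ, ((q : ℝ) * ν v) • v := by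
    have h2 := congrArg Prod.fst h
    rw [Prod.fst_sum, Prod.fst_sum] at h2
    simpa [rayGen, smul_smul, mul_comm] using h2
  have := rep_eq hΦ hsnd hfst
  intro v hv
  exact mul_left_cancel₀ hqne (this v hv)

end Aux


section Cone

variable {d : ℕ}

/-- Lattice points of the cone over the simplex `Φ`, half-open except in the directions
indexed by `A`. -/
def coneLat (q : ℕ) (Φ A : Finset (Fin d → ℝ)) : Set ((Fin d → ℝ) × ℝ) :=
  {p | IsLatticePtC p ∧ ∃ μ : (Fin d → ℝ) → ℝ,
      (∀ v ∈ Φ, 0 < μ v) ∧ (∀ v ∈ Φ, v ∉ A → μ v ≤ 1) ∧ p = ∑ v ∈ Φ, μ v • rayGen q v}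

/-- The points of `S` at height `t`. -/
def secEq (S : Set ((Fin d → ℝ) × ℝ)) (t : ℕ) : Set ((Fin d → ℝ) × ℝ) :=
  {p ∈ S | p.2 = (t : ℝ)}

/-- The generating series of the heights of points of `S`. -/
noncomputable def ser (S : Set ((Fin d → ℝ) × ℝ)) : PowerSeries ℤ :=
  PowerSeries.mk fun t => ((secEq S t).ncard : ℤ)

lemma ray_sum_snd (q : ℕ) (Φ : Finset (Fin d → ℝ)) (μ : (Fin d → ℝ) → ℝ) :
    (∑ v ∈ Φ, μ v • rayGen q v).2 = ∑ v ∈ Φ, μ v * q := by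
  rw [Prod.snd_sum]
  exact Finset.sum_congr rfl fun v _ => by simp [rayGen, smul_eq_mul]

lemma ray_sum_fst (q : ℕ) (Φ : Finset (Fin d → ℝ)) (μ : (Fin d → ℝ) → ℝ) :
    (∑ v ∈ Φ, μ v • rayGen q v).1 = ∑ v ∈ Φ, (μ v * q) • v := by
  rw [Prod.fst_sum]
  exact Finset.sum_congr rfl fun v _ => by
    show μ v • ((q : ℝ) • v) = (μ v * q) • v
    rw [smul_smul]

lemma sum_update_ray (q : ℕ) {Φ : Finset (Fin d → ℝ)} {v₀ : Fin d → ℝ} (hv₀ : v₀ ∈ Φ)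
    (μ : (Fin d → ℝ) → ℝ) (c : ℝ) :
    ∑ v ∈ Φ, (Function.update μ v₀ c) v • rayGen q v
      = (∑ v ∈ Φ, μ v • rayGen q v) + (c - μ v₀) • rayGen q v₀ := by
  have hcong : ∀ v ∈ Φ, Function.update μ v₀ c v • rayGen q v
      = Function.update (fun v => μ v • rayGen q v) v₀ (c • rayGen q v₀) v := by
    intro v _
    by_cases h : v = v₀
    · subst h; rw [Function.update_self, Function.update_self]
    · rw [Function.update_of_ne h, Function.update_of_ne h]
  rw [Finset.sum_congr rfl hcong, Finset.sum_update_of_mem hv₀,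
    Finset.sum_eq_sum_sdiff_singleton_add hv₀ (fun v => μ v • rayGen q v), sub_smul]
  abel

lemma secEq_coneLat_finite {q : ℕ} (Φ A : Finset (Fin d → ℝ)) (t : ℕ) :
    (secEq (coneLat q Φ A) t).Finite := by
  obtain ⟨C, hC0, hC⟩ := exists_coord_bound Φ
  apply finite_of_latticeC_bounded ((t : ℝ) * C + t)
  · rintro p ⟨⟨hlat, μ, hpos, hle, hrep⟩, hht⟩
    have hsnd : ∑ v ∈ Φ, μ v * q = (t : ℝ) := by
      rw [← ray_sum_snd q Φ μ, ← hrep, hht]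
    constructor
    · intro i
      have h1 : p.1 i = ∑ v ∈ Φ, (μ v * q) * v i := by
        rw [hrep, ray_sum_fst]
        rw [Finset.sum_apply]
        exact Finset.sum_congr rfl fun v _ => rfl
      rw [h1]
      calc |∑ v ∈ Φ, (μ v * q) * v i| ≤ ∑ v ∈ Φ, |(μ v * q) * v i| :=
            Finset.abs_sum_le_sum_abs _ _
      _ ≤ ∑ v ∈ Φ, (μ v * q) * C := by
            apply Finset.sum_le_sum
            intro v hv
            rw [abs_mul]
            have hμq : 0 ≤ μ v * q := by
              have := (hpos v hv).le
              positivity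
            rw [abs_of_nonneg hμq]
            exact mul_le_mul_of_nonneg_left (hC v hv i) hμq
      _ = (∑ v ∈ Φ, μ v * q) * C := by rw [Finset.sum_mul]
      _ = (t : ℝ) * C := by rw [hsnd]
      _ ≤ (t : ℝ) * C + t := by
            have ht : (0:ℝ) ≤ (t : ℝ) := Nat.cast_nonneg t
            linarith
    · rw [hht, abs_of_nonneg (Nat.cast_nonneg t)]
      have : 0 ≤ (t : ℝ) * C := by positivity
      linarith
  · rintro p ⟨⟨hlat, _⟩, _⟩
    exact hlat

/-- The one-step decomposition: opening up the cone in the direction `v₀`. -/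
lemma coneLat_insert_decomp {q : ℕ} (hq : 0 < q) {Φ A : Finset (Fin d → ℝ)}
    (hΦ : AffineIndependent ℝ ((↑) : ↑Φ → (Fin d → ℝ)))
    {v₀ : Fin d → ℝ} (hv₀ : v₀ ∈ Φ) (hv₀A : v₀ ∉ A)
    (hqv : ∀ i, ∃ n : ℤ, (q : ℝ) * v₀ i = n) (t : ℕ) :
    secEq (coneLat q Φ (insert v₀ A)) t =
      ⋃ j ∈ Finset.range (t / q + 1),
        (fun p => p + (j : ℝ) • rayGen q v₀) '' secEq (coneLat q Φ A) (t - q * j) := by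
  have hlatray : IsLatticePtC (rayGen q v₀) := latC_rayGen hqv
  ext p
  constructor
  · rintro ⟨⟨hlat, μ, hpos, hle, hrep⟩, hht⟩
    have hμ0 : 0 < μ v₀ := hpos v₀ hv₀
    set k : ℕ := (⌈μ v₀⌉ - 1).toNat with hk
    have hceil : (0 : ℤ) < ⌈μ v₀⌉ := Int.ceil_pos.mpr hμ0
    have hkz : (k : ℤ) = ⌈μ v₀⌉ - 1 := Int.toNat_of_nonneg (by omega)
    have hk1 : (k : ℝ) < μ v₀ := by
      have h2 : ((⌈μ v₀⌉ : ℝ) - 1) < μ v₀ := by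
        have := Int.ceil_lt_add_one (μ v₀)
        linarith
      have h3 : ((k : ℤ) : ℝ) = (⌈μ v₀⌉ : ℝ) - 1 := by rw [hkz]; push_cast; ring
      rw [show ((k : ℕ) : ℝ) = ((k : ℤ) : ℝ) by push_cast; ring, h3]
      exact h2
    have hk2 : μ v₀ ≤ (k : ℝ) + 1 := by
      have h3 : ((k : ℤ) : ℝ) = (⌈μ v₀⌉ : ℝ) - 1 := by rw [hkz]; push_cast; ring
      have := Int.le_ceil (μ v₀)
      rw [show ((k : ℕ) : ℝ) = ((k : ℤ) : ℝ) by push_cast; ring, h3]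
      linarith
    have hsnd : ∑ v ∈ Φ, μ v * q = (t : ℝ) := by
      rw [← ray_sum_snd q Φ μ, ← hrep, hht]
    have hqk_lt : (q : ℝ) * k < t := by
      have h1 : μ v₀ * q ≤ ∑ v ∈ Φ, μ v * q := by
        apply Finset.single_le_sum (f := fun v => μ v * q) _ hv₀
        intro v hv
        have := (hpos v hv).le
        positivity
      have h2 : (q : ℝ) * k < μ v₀ * q := by
        have hq0 : (0 : ℝ) < q := by exact_mod_cast hq
        nlinarith
      linarith [hsnd ▸ h1]
    have hqk : q * k ≤ t := by
      have : ((q * k : ℕ) : ℝ) < (t : ℝ) := by push_cast; linarith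
      exact_mod_cast this.le
    have hjrange : k ∈ Finset.range (t / q + 1) := by
      rw [Finset.mem_range, Nat.lt_succ_iff, Nat.le_div_iff_mul_le hq, mul_comm]
      exact hqk
    refine Set.mem_biUnion hjrange ?_
    refine ⟨p - (k : ℝ) • rayGen q v₀, ⟨⟨?_, ?_⟩, ?_⟩, ?_⟩
    · exact latC_sub hlat (latC_nat_smul hlatray k)
    · refine ⟨Function.update μ v₀ (μ v₀ - k), ?_, ?_, ?_⟩
      · intro v hv
        by_cases hvv : v = v₀
        · subst hvv
          rw [Function.update_self]
          linarith
        · rw [Function.update_of_ne hvv]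
          exact hpos v hv
      · intro v hv hvA
        by_cases hvv : v = v₀
        · subst hvv
          rw [Function.update_self]
          linarith
        · rw [Function.update_of_ne hvv]
          exact hle v hv (fun hmem => by
            rcases Finset.mem_insert.mp hmem with h | h
            · exact hvv h
            · exact hvA h)
      · rw [sum_update_ray q hv₀ μ _, ← hrep]
        have : (μ v₀ - (k : ℝ)) - μ v₀ = -(k : ℝ) := by ring
        rw [this, neg_smul, ← sub_eq_add_neg]
    · show (p - (k : ℝ) • rayGen q v₀).2 = ((t - q * k : ℕ) : ℝ)
      have h2 : ((k : ℝ) • rayGen q v₀).2 = (k : ℝ) * q := by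
        simp [rayGen, smul_eq_mul]
      show p.2 - ((k : ℝ) • rayGen q v₀).2 = ((t - q * k : ℕ) : ℝ)
      rw [h2, hht, Nat.cast_sub hqk]
      push_cast
      ring
    · show p - (k : ℝ) • rayGen q v₀ + (k : ℝ) • rayGen q v₀ = p
      abel
  · intro hp
    rw [Set.mem_iUnion₂] at hp
    obtain ⟨j, hj, p', ⟨⟨hlat, μ, hpos, hle, hrep⟩, hht⟩, rfl⟩ := hp
    rw [Finset.mem_range, Nat.lt_succ_iff, Nat.le_div_iff_mul_le hq] at hj
    have hqj : q * j ≤ t := by rw [mul_comm]; exact hj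
    refine ⟨⟨latC_add hlat (latC_nat_smul hlatray j), ?_⟩, ?_⟩
    · refine ⟨Function.update μ v₀ (μ v₀ + j), ?_, ?_, ?_⟩
      · intro v hv
        by_cases hvv : v = v₀
        · subst hvv
          rw [Function.update_self]
          have := hpos v hv
          positivity
        · rw [Function.update_of_ne hvv]
          exact hpos v hv
      · intro v hv hvA
        have hvv : v ≠ v₀ := fun h => hvA (h ▸ Finset.mem_insert_self v₀ A)
        rw [Function.update_of_ne hvv]
        exact hle v hv (fun h => hvA (Finset.mem_insert_of_mem h))
      · rw [sum_update_ray q hv₀ μ _, ← hrep]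
        have : (μ v₀ + (j : ℝ)) - μ v₀ = (j : ℝ) := by ring
        rw [this]
    · show (p' + (j : ℝ) • rayGen q v₀).2 = (t : ℝ)
      have h2 : ((j : ℝ) • rayGen q v₀).2 = (j : ℝ) * q := by
        simp [rayGen, smul_eq_mul]
      show p'.2 + ((j : ℝ) • rayGen q v₀).2 = (t : ℝ)
      rw [h2, hht, Nat.cast_sub hqj]
      push_cast
      ring

/-- The one-step series identity. -/
lemma ser_coneLat_insert {q : ℕ} (hq : 0 < q) {Φ A : Finset (Fin d → ℝ)}
    (hΦ : AffineIndependent ℝ ((↑) : ↑Φ → (Fin d → ℝ)))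
    {v₀ : Fin d → ℝ} (hv₀ : v₀ ∈ Φ) (hv₀A : v₀ ∉ A)
    (hqv : ∀ i, ∃ n : ℤ, (q : ℝ) * v₀ i = n) :
    ser (coneLat q Φ (insert v₀ A)) = ser (coneLat q Φ A) * G q := by
  ext t
  rw [coeff_mul_G hq]
  rw [ser, PowerSeries.coeff_mk]
  simp only [ser, PowerSeries.coeff_mk]
  rw [coneLat_insert_decomp hq hΦ hv₀ hv₀A hqv t]
  rw [ncard_partition]
  · push_cast
    apply Finset.sum_congr rfl
    intro j _
    rw [Set.ncard_image_of_injective _ (add_left_injective ((j : ℝ) • rayGen q v₀))]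
  · intro j _
    exact Set.Finite.image _ (secEq_coneLat_finite Φ A _)
  · intro j₁ hj₁ j₂ hj₂ hne
    rw [Set.disjoint_left]
    rintro x ⟨p₁, ⟨⟨hlat₁, μ₁, hpos₁, hle₁, hrep₁⟩, hht₁⟩, rfl⟩
      ⟨p₂, ⟨⟨hlat₂, μ₂, hpos₂, hle₂, hrep₂⟩, hht₂⟩, hx⟩
    have hrepa : p₁ + (j₁ : ℝ) • rayGen q v₀
        = ∑ v ∈ Φ, (Function.update μ₁ v₀ (μ₁ v₀ + j₁)) v • rayGen q v := by
      rw [sum_update_ray q hv₀ μ₁ _, ← hrep₁]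
      have : (μ₁ v₀ + (j₁ : ℝ)) - μ₁ v₀ = (j₁ : ℝ) := by ring
      rw [this]
    have hrepb : p₂ + (j₂ : ℝ) • rayGen q v₀
        = ∑ v ∈ Φ, (Function.update μ₂ v₀ (μ₂ v₀ + j₂)) v • rayGen q v := by
      rw [sum_update_ray q hv₀ μ₂ _, ← hrep₂]
      have : (μ₂ v₀ + (j₂ : ℝ)) - μ₂ v₀ = (j₂ : ℝ) := by ring
      rw [this]
    have hx' : p₂ + (j₂ : ℝ) • rayGen q v₀ = p₁ + (j₁ : ℝ) • rayGen q v₀ := hx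
    have heq := repC_eq hq hΦ (μ := Function.update μ₁ v₀ (μ₁ v₀ + j₁))
      (ν := Function.update μ₂ v₀ (μ₂ v₀ + j₂)) (by rw [← hrepa, ← hrepb]; exact hx'.symm) v₀ hv₀
    rw [Function.update_self, Function.update_self] at heq
    have h1 : 0 < μ₁ v₀ := hpos₁ v₀ hv₀
    have h2 : 0 < μ₂ v₀ := hpos₂ v₀ hv₀
    have h3 : μ₁ v₀ ≤ 1 := hle₁ v₀ hv₀ hv₀A
    have h4 : μ₂ v₀ ≤ 1 := hle₂ v₀ hv₀ hv₀A
    rcases Nat.lt_or_ge j₁ j₂ with h | h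
    · have : (j₁ : ℝ) + 1 ≤ (j₂ : ℝ) := by exact_mod_cast h
      linarith
    · rcases Nat.lt_or_ge j₂ j₁ with h' | h'
      · have : (j₂ : ℝ) + 1 ≤ (j₁ : ℝ) := by exact_mod_cast h'
        linarith
      · exact hne (le_antisymm h h').symm

/-- Iterating: fully opening up the cone. -/
lemma ser_coneLat_subset {q : ℕ} (hq : 0 < q) {Φ : Finset (Fin d → ℝ)}
    (hΦ : AffineIndependent ℝ ((↑) : ↑Φ → (Fin d → ℝ)))
    (hqv : ∀ v ∈ Φ, ∀ i, ∃ n : ℤ, (q : ℝ) * v i = n) :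
    ∀ A : Finset (Fin d → ℝ), A ⊆ Φ →
      ser (coneLat q Φ A) = ser (coneLat q Φ ∅) * G q ^ A.card := by
  intro A
  induction A using Finset.induction_on with
  | empty => intro _; simp
  | @insert a s ha ih =>
    intro hsub
    have has : a ∈ Φ := hsub (Finset.mem_insert_self a s)
    have hs : s ⊆ Φ := fun x hx => hsub (Finset.mem_insert_of_mem hx)
    rw [ser_coneLat_insert hq hΦ has ha (hqv a has), ih hs,
      Finset.card_insert_of_notMem ha, pow_succ, mul_assoc]

end Cone


section Box

variable {d : ℕ}

/-- The lattice points of the open box of `Ω`. -/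
def boxLat (q : ℕ) (Ω : Finset (Fin d → ℝ)) : Set ((Fin d → ℝ) × ℝ) :=
  {p | p ∈ faceBox q Ω ∧ IsLatticePtC p}

lemma boxLat_snd_nonneg {q : ℕ} {Ω : Finset (Fin d → ℝ)} {p : (Fin d → ℝ) × ℝ}
    (hp : p ∈ faceBox q Ω) : 0 ≤ p.2 := by
  obtain ⟨lam, hlam, hrep⟩ := hp
  have h : p.2 = ∑ v ∈ Ω, lam v * q := by rw [hrep, ray_sum_snd]
  rw [h]
  apply Finset.sum_nonneg
  intro v hv
  have := (hlam v hv).1.le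
  positivity

lemma boxLat_finite (q : ℕ) (Ω : Finset (Fin d → ℝ)) : (boxLat q Ω).Finite := by
  obtain ⟨C, hC0, hC⟩ := exists_coord_bound Ω
  apply finite_of_latticeC_bounded ((Ω.card : ℝ) * q * (C + 1))
  · rintro p ⟨⟨lam, hlam, hrep⟩, hlat⟩
    have hq0 : (0:ℝ) ≤ q := Nat.cast_nonneg q
    constructor
    · intro i
      have h1 : p.1 i = ∑ v ∈ Ω, (lam v * q) * v i := by
        rw [hrep, ray_sum_fst, Finset.sum_apply]
        exact Finset.sum_congr rfl fun v _ => rfl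
      rw [h1]
      calc |∑ v ∈ Ω, (lam v * q) * v i| ≤ ∑ v ∈ Ω, |(lam v * q) * v i| :=
            Finset.abs_sum_le_sum_abs _ _
      _ ≤ ∑ _v ∈ Ω, (q : ℝ) * (C + 1) := by
            apply Finset.sum_le_sum
            intro v hv
            obtain ⟨h0, h1'⟩ := hlam v hv
            have e1 : |(lam v * q) * v i| = lam v * (q:ℝ) * |v i| := by
              rw [abs_mul, abs_of_nonneg (mul_nonneg h0.le hq0)]
            rw [e1]
            have t1 : lam v * (q:ℝ) ≤ (q:ℝ) := by
              nlinarith [mul_nonneg (by linarith : (0:ℝ) ≤ 1 - lam v) hq0]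
            have t2 : |v i| ≤ C + 1 := by linarith [hC v hv i]
            calc lam v * (q:ℝ) * |v i| ≤ (q:ℝ) * |v i| :=
                  mul_le_mul_of_nonneg_right t1 (abs_nonneg _)
            _ ≤ (q:ℝ) * (C + 1) := mul_le_mul_of_nonneg_left t2 hq0
      _ = (Ω.card : ℝ) * ((q:ℝ) * (C + 1)) := by
            rw [Finset.sum_const, nsmul_eq_mul]
      _ = (Ω.card : ℝ) * q * (C + 1) := by ring
    · have h2 : p.2 = ∑ v ∈ Ω, lam v * q := by rw [hrep, ray_sum_snd]
      have hnn : 0 ≤ p.2 := boxLat_snd_nonneg ⟨lam, hlam, hrep⟩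
      rw [abs_of_nonneg hnn, h2]
      calc ∑ v ∈ Ω, lam v * q ≤ ∑ _v ∈ Ω, (q:ℝ) := by
            apply Finset.sum_le_sum
            intro v hv
            obtain ⟨h0, h1'⟩ := hlam v hv
            nlinarith
      _ = (Ω.card : ℝ) * q := by rw [Finset.sum_const, nsmul_eq_mul]
      _ ≤ (Ω.card : ℝ) * q * (C + 1) := by
            nlinarith [mul_nonneg (mul_nonneg (Nat.cast_nonneg (α := ℝ) Ω.card) hq0) hC0]
  · rintro p ⟨_, hlat⟩
    exact hlat

lemma boxLat_height {q : ℕ} {Ω : Finset (Fin d → ℝ)} {p : (Fin d → ℝ) × ℝ}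
    (hp : p ∈ boxLat q Ω) : ∃ s : ℕ, p.2 = (s : ℝ) ∧ ⌊p.2⌋.toNat = s := by
  obtain ⟨n, hn⟩ := hp.2.2
  have h0 : 0 ≤ p.2 := boxLat_snd_nonneg hp.1
  have hn0 : (0:ℤ) ≤ n := by
    have : (0:ℝ) ≤ (n:ℝ) := hn ▸ h0
    exact_mod_cast this
  refine ⟨n.toNat, ?_, ?_⟩
  · rw [hn, show ((n.toNat : ℕ) : ℝ) = ((n.toNat : ℤ) : ℝ) by push_cast; ring,
      Int.toNat_of_nonneg hn0]
  · rw [hn, Int.floor_intCast]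

lemma boxPoly_eq_sum (q : ℕ) (Ω : Finset (Fin d → ℝ)) :
    boxPoly q Ω = ∑ p ∈ (boxLat_finite q Ω).toFinset, Polynomial.X ^ (⌊p.2⌋.toNat) :=
  finsum_mem_eq_finite_toFinset_sum _ (boxLat_finite q Ω)

lemma coeff_boxPoly (q : ℕ) (Ω : Finset (Fin d → ℝ)) (s : ℕ) :
    (boxPoly q Ω).coeff s = ((secEq (boxLat q Ω) s).ncard : ℤ) := by
  rw [boxPoly_eq_sum, Polynomial.finset_sum_coeff]
  simp_rw [Polynomial.coeff_X_pow]
  rw [Finset.sum_boole]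
  have hset : secEq (boxLat q Ω) s
      = ↑((boxLat_finite q Ω).toFinset.filter (fun p => s = ⌊p.2⌋.toNat)) := by
    ext p
    simp only [Finset.coe_filter, Set.mem_setOf_eq, Set.Finite.mem_toFinset, secEq]
    constructor
    · rintro ⟨hp, hh⟩
      obtain ⟨s', hs', hfl⟩ := boxLat_height hp
      have hss : s = s' := by exact_mod_cast hh.symm.trans hs'
      exact ⟨hp, by rw [hfl]; exact hss⟩
    · rintro ⟨hp, hfl⟩
      obtain ⟨s', hs', hfl'⟩ := boxLat_height hp
      have hss : s = s' := hfl.trans hfl'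
      exact ⟨hp, by rw [hs', hss]⟩
  rw [hset, Set.ncard_coe_finset]

lemma faceBox_empty (q : ℕ) : faceBox q (∅ : Finset (Fin d → ℝ)) = {0} := by
  ext p
  simp only [faceBox, Set.mem_setOf_eq, Finset.sum_empty, Set.mem_singleton_iff]
  constructor
  · rintro ⟨lam, _, rfl⟩; rfl
  · rintro rfl
    exact ⟨fun _ => 0, fun v hv => absurd hv (Finset.notMem_empty v), rfl⟩

lemma boxPoly_empty (q : ℕ) : boxPoly (d := d) q ∅ = 1 := by
  rw [boxPoly, genPoly]
  have h : {p : (Fin d → ℝ) × ℝ | p ∈ faceBox q (∅ : Finset (Fin d → ℝ)) ∧ IsLatticePtC p}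
      = {(0 : (Fin d → ℝ) × ℝ)} := by
    ext p
    rw [Set.mem_setOf_eq, faceBox_empty]
    simp only [Set.mem_singleton_iff]
    constructor
    · rintro ⟨h1, _⟩; exact h1
    · rintro rfl; exact ⟨rfl, latC_zero⟩
  rw [h, finsum_mem_singleton]
  norm_num

lemma shift_snd (q : ℕ) (F : Finset (Fin d → ℝ)) :
    (∑ v ∈ F, rayGen q v).2 = (F.card : ℝ) * q := by
  rw [Prod.snd_sum]
  simp [rayGen, Finset.sum_const, nsmul_eq_mul]

lemma shift_rep {q : ℕ} {Φ Ω : Finset (Fin d → ℝ)} (hΩΦ : Ω ⊆ Φ) {p' : (Fin d → ℝ) × ℝ}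
    (lam : (Fin d → ℝ) → ℝ) (hrep' : p' = ∑ v ∈ Ω, lam v • rayGen q v) :
    p' + ∑ v ∈ Φ \ Ω, rayGen q v
      = ∑ v ∈ Φ, (if v ∈ Ω then lam v else 1) • rayGen q v := by
  rw [← Finset.sum_sdiff hΩΦ (f := fun v => (if v ∈ Ω then lam v else 1) • rayGen q v)]
  have h1 : ∑ v ∈ Φ \ Ω, (if v ∈ Ω then lam v else 1) • rayGen q v
      = ∑ v ∈ Φ \ Ω, rayGen q v := by
    apply Finset.sum_congr rfl
    intro v hv
    rw [if_neg (Finset.mem_sdiff.mp hv).2, one_smul]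
  have h2 : ∑ v ∈ Ω, (if v ∈ Ω then lam v else 1) • rayGen q v
      = ∑ v ∈ Ω, lam v • rayGen q v := by
    apply Finset.sum_congr rfl
    intro v hv
    rw [if_pos hv]
  rw [h1, h2, ← hrep']
  abel

/-- Decomposition of the half-open cone into shifted open boxes. -/
lemma coneLat_empty_decomp {q : ℕ} (hq : 0 < q) {Φ : Finset (Fin d → ℝ)}
    (hΦ : AffineIndependent ℝ ((↑) : ↑Φ → (Fin d → ℝ)))
    (hqv : ∀ v ∈ Φ, ∀ i, ∃ n : ℤ, (q : ℝ) * v i = n) (t : ℕ) :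
    secEq (coneLat q Φ ∅) t =
      ⋃ Ω ∈ Φ.powerset.filter (fun Ω => q * (Φ.card - Ω.card) ≤ t),
        (fun p => p + ∑ v ∈ Φ \ Ω, rayGen q v) ''
          secEq (boxLat q Ω) (t - q * (Φ.card - Ω.card)) := by
  ext p
  constructor
  · rintro ⟨⟨hlat, μ, hpos, hle, hrep⟩, hht⟩
    set Ω := Φ.filter (fun v => μ v < 1) with hΩdef
    have hΩΦ : Ω ⊆ Φ := Finset.filter_subset _ _
    have hcard : Ω.card ≤ Φ.card := Finset.card_le_card hΩΦ
    have hone : ∀ v ∈ Φ \ Ω, μ v = 1 := by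
      intro v hv
      rw [Finset.mem_sdiff, hΩdef, Finset.mem_filter] at hv
      have h1 := hle v hv.1 (Finset.notMem_empty v)
      have h2 : ¬ μ v < 1 := fun h => hv.2 ⟨hv.1, h⟩
      exact le_antisymm h1 (not_lt.mp h2)
    have hsplit : p = (∑ v ∈ Φ \ Ω, rayGen q v) + ∑ v ∈ Ω, μ v • rayGen q v := by
      rw [hrep, ← Finset.sum_sdiff hΩΦ (f := fun v => μ v • rayGen q v)]
      congr 1
      apply Finset.sum_congr rfl
      intro v hv
      rw [hone v hv, one_smul]
    have hsdcard : (Φ \ Ω).card = Φ.card - Ω.card := Finset.card_sdiff_of_subset hΩΦ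
    have hlatsh : IsLatticePtC (∑ v ∈ Φ \ Ω, rayGen q v) :=
      latC_sum _ _ (fun v hv => latC_rayGen (hqv v (Finset.mem_sdiff.mp hv).1))
    have hp'box : p - (∑ v ∈ Φ \ Ω, rayGen q v) ∈ faceBox q Ω := by
      refine ⟨μ, ?_, ?_⟩
      · intro v hv
        have hv' := hv
        rw [hΩdef, Finset.mem_filter] at hv'
        exact ⟨hpos v hv'.1, hv'.2⟩
      · rw [hsplit]; abel
    have hp'snd : (p - (∑ v ∈ Φ \ Ω, rayGen q v)).2
        = (t : ℝ) - ((q * (Φ.card - Ω.card) : ℕ) : ℝ) := by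
      show p.2 - (∑ v ∈ Φ \ Ω, rayGen q v).2 = _
      rw [hht, shift_snd, hsdcard, Nat.cast_mul, Nat.cast_sub hcard]
      ring
    have h0 : 0 ≤ (p - (∑ v ∈ Φ \ Ω, rayGen q v)).2 := boxLat_snd_nonneg hp'box
    have hqle : q * (Φ.card - Ω.card) ≤ t := by
      have h1 : ((q * (Φ.card - Ω.card) : ℕ) : ℝ) ≤ (t : ℝ) := by
        rw [hp'snd] at h0
        linarith
      exact_mod_cast h1
    have hΩmem : Ω ∈ Φ.powerset.filter (fun Ω => q * (Φ.card - Ω.card) ≤ t) :=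
      Finset.mem_filter.mpr ⟨Finset.mem_powerset.mpr hΩΦ, hqle⟩
    apply Set.mem_biUnion hΩmem
    refine ⟨p - (∑ v ∈ Φ \ Ω, rayGen q v), ⟨⟨hp'box, latC_sub hlat hlatsh⟩, ?_⟩, ?_⟩
    · rw [hp'snd, Nat.cast_sub hqle]
    · show p - (∑ v ∈ Φ \ Ω, rayGen q v) + (∑ v ∈ Φ \ Ω, rayGen q v) = p
      abel
  · intro hp
    rw [Set.mem_iUnion₂] at hp
    obtain ⟨Ω, hΩmem, p', ⟨⟨⟨lam, hlam, hrep'⟩, hlat'⟩, hht'⟩, rfl⟩ := hp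
    rw [Finset.mem_filter, Finset.mem_powerset] at hΩmem
    obtain ⟨hΩΦ, hqle⟩ := hΩmem
    have hcard : Ω.card ≤ Φ.card := Finset.card_le_card hΩΦ
    have hlatsh : IsLatticePtC (∑ v ∈ Φ \ Ω, rayGen q v) :=
      latC_sum _ _ (fun v hv => latC_rayGen (hqv v (Finset.mem_sdiff.mp hv).1))
    refine ⟨⟨latC_add hlat' hlatsh, ?_⟩, ?_⟩
    · refine ⟨fun v => if v ∈ Ω then lam v else 1, ?_, ?_, ?_⟩
      · intro v hv
        show 0 < if v ∈ Ω then lam v else 1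
        by_cases h : v ∈ Ω
        · rw [if_pos h]; exact (hlam v h).1
        · rw [if_neg h]; norm_num
      · intro v hv _
        show (if v ∈ Ω then lam v else 1) ≤ 1
        by_cases h : v ∈ Ω
        · rw [if_pos h]; exact (hlam v h).2.le
        · rw [if_neg h]
      · exact shift_rep hΩΦ lam hrep'
    · show (p' + ∑ v ∈ Φ \ Ω, rayGen q v).2 = (t : ℝ)
      show p'.2 + (∑ v ∈ Φ \ Ω, rayGen q v).2 = (t : ℝ)
      rw [hht', shift_snd, Finset.card_sdiff_of_subset hΩΦ, Nat.cast_sub hqle, Nat.cast_mul,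
        Nat.cast_sub hcard]
      ring

/-- The series of the half-open cone is the polynomial `HB`. -/
lemma ser_coneLat_empty {q : ℕ} (hq : 0 < q) {Φ : Finset (Fin d → ℝ)}
    (hΦ : AffineIndependent ℝ ((↑) : ↑Φ → (Fin d → ℝ)))
    (hqv : ∀ v ∈ Φ, ∀ i, ∃ n : ℤ, (q : ℝ) * v i = n) :
    ser (coneLat q Φ ∅)
      = ((∑ Ω ∈ Φ.powerset, boxPoly q Ω * Polynomial.X ^ (q * (Φ.card - Ω.card)) :
          Polynomial ℤ) : PowerSeries ℤ) := by
  ext t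
  rw [ser, PowerSeries.coeff_mk, Polynomial.coeff_coe, Polynomial.finset_sum_coeff]
  simp_rw [Polynomial.coeff_mul_X_pow', coeff_boxPoly]
  rw [coneLat_empty_decomp hq hΦ hqv t]
  rw [ncard_partition _ _ ?fin ?dis]
  case fin =>
    intro Ω _
    exact Set.Finite.image _ ((boxLat_finite q Ω).subset (Set.sep_subset _ _))
  case dis =>
    intro Ω₁ hΩ₁ Ω₂ hΩ₂ hne
    rw [Finset.mem_filter, Finset.mem_powerset] at hΩ₁ hΩ₂
    rw [Set.disjoint_left]
    rintro x ⟨p₁, ⟨⟨⟨lam₁, hlam₁, hrep₁⟩, hlat₁⟩, hht₁⟩, rfl⟩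
      ⟨p₂, ⟨⟨⟨lam₂, hlam₂, hrep₂⟩, hlat₂⟩, hht₂⟩, hx⟩
    have hx' : p₂ + ∑ v ∈ Φ \ Ω₂, rayGen q v = p₁ + ∑ v ∈ Φ \ Ω₁, rayGen q v := hx
    have hr1 := shift_rep hΩ₁.1 lam₁ hrep₁
    have hr2 := shift_rep hΩ₂.1 lam₂ hrep₂
    have heq := repC_eq hq hΦ (μ := fun v => if v ∈ Ω₁ then lam₁ v else 1)
      (ν := fun v => if v ∈ Ω₂ then lam₂ v else 1)
      (by rw [← hr1, ← hr2]; exact hx'.symm)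
    apply hne
    apply Finset.ext
    intro v
    constructor
    · intro hv
      have hvΦ : v ∈ Φ := hΩ₁.1 hv
      have h1 : (if v ∈ Ω₁ then lam₁ v else 1) = (if v ∈ Ω₂ then lam₂ v else 1) := heq v hvΦ
      rw [if_pos hv] at h1
      by_contra hv2
      rw [if_neg hv2] at h1
      exact absurd (h1 ▸ (hlam₁ v hv).2) (lt_irrefl 1)
    · intro hv
      have hvΦ : v ∈ Φ := hΩ₂.1 hv
      have h1 : (if v ∈ Ω₁ then lam₁ v else 1) = (if v ∈ Ω₂ then lam₂ v else 1) := heq v hvΦ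
      rw [if_pos hv] at h1
      by_contra hv2
      rw [if_neg hv2] at h1
      exact absurd (h1.symm ▸ (hlam₂ v hv).2) (lt_irrefl 1)
  · -- turn the sum over the filtered powerset into a sum over the powerset
    rw [Finset.sum_filter]
    push_cast
    apply Finset.sum_congr rfl
    intro Ω _
    by_cases h : q * (Φ.card - Ω.card) ≤ t
    · rw [if_pos h, if_pos h,
        Set.ncard_image_of_injective _ (add_left_injective (∑ v ∈ Φ \ Ω, rayGen q v))]
    · rw [if_neg h, if_neg h]

end Box


section StepA

variable {d : ℕ}

/-- The polynomial `HB(Φ) = ∑_{Ω ⊆ Φ} B(Ω;z) z^{q(#Φ-#Ω)}`. -/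
noncomputable def HB (q : ℕ) (Φ : Finset (Fin d → ℝ)) : Polynomial ℤ :=
  ∑ Ω ∈ Φ.powerset, boxPoly q Ω * Polynomial.X ^ (q * (Φ.card - Ω.card))

lemma HB_def (q : ℕ) (Φ : Finset (Fin d → ℝ)) :
    HB q Φ = ∑ Ω ∈ Φ.powerset, boxPoly q Ω * Polynomial.X ^ (q * (Φ.card - Ω.card)) := rfl

lemma ser_coneLat_empty' {q : ℕ} (hq : 0 < q) {Φ : Finset (Fin d → ℝ)}
    (hΦ : AffineIndependent ℝ ((↑) : ↑Φ → (Fin d → ℝ)))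
    (hqv : ∀ v ∈ Φ, ∀ i, ∃ n : ℤ, (q : ℝ) * v i = n) :
    ser (coneLat q Φ ∅) = ((HB q Φ : Polynomial ℤ) : PowerSeries ℤ) := by
  rw [HB_def]
  exact ser_coneLat_empty hq hΦ hqv

lemma finset_sum_comp {ι : Type*} (s : Finset ι) (f : ι → Polynomial ℤ) (g : Polynomial ℤ) :
    (∑ i ∈ s, f i).comp g = ∑ i ∈ s, (f i).comp g := by
  simp only [Polynomial.comp, Polynomial.eval₂_finset_sum]

lemma cone_pt_convex {q : ℕ} (hq0 : 0 < q) {Φ : Finset (Fin d → ℝ)} {p : (Fin d → ℝ) × ℝ}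
    (μ : (Fin d → ℝ) → ℝ) (hrep : p = ∑ v ∈ Φ, μ v • rayGen q v) {t : ℕ} (ht : 0 < t)
    (hht : p.2 = (t : ℝ)) :
    (∑ v ∈ Φ, (q : ℝ) * μ v / t) = 1 ∧
      ∑ v ∈ Φ, ((q : ℝ) * μ v / t) • v = (t : ℝ)⁻¹ • p.1 := by
  have htR : (0:ℝ) < t := by exact_mod_cast ht
  have htne : (t : ℝ) ≠ 0 := htR.ne'
  have hsnd : ∑ v ∈ Φ, μ v * q = (t : ℝ) := by rw [← ray_sum_snd q Φ μ, ← hrep, hht]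
  constructor
  · have h : ∀ v ∈ Φ, (q:ℝ) * μ v / t = (μ v * q) * (t:ℝ)⁻¹ := fun v _ => by ring
    rw [Finset.sum_congr rfl h, ← Finset.sum_mul, hsnd, mul_inv_cancel₀ htne]
  · have hfst : p.1 = ∑ v ∈ Φ, (μ v * q) • v := by rw [hrep, ray_sum_fst]
    rw [hfst, Finset.smul_sum]
    exact Finset.sum_congr rfl fun v _ => by
      rw [smul_smul]
      congr 1
      field_simp

lemma cone_pt_hull {q : ℕ} (hq0 : 0 < q) {Φ : Finset (Fin d → ℝ)} {p : (Fin d → ℝ) × ℝ}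
    (μ : (Fin d → ℝ) → ℝ) (hpos : ∀ v ∈ Φ, 0 < μ v)
    (hrep : p = ∑ v ∈ Φ, μ v • rayGen q v) {t : ℕ} (ht : 0 < t) (hht : p.2 = (t : ℝ)) :
    (t : ℝ)⁻¹ • p.1 ∈ convexHull ℝ (↑Φ : Set (Fin d → ℝ)) := by
  obtain ⟨h1, h2⟩ := cone_pt_convex hq0 μ hrep ht hht
  have htR : (0:ℝ) < t := by exact_mod_cast ht
  have hqR : (0:ℝ) < q := by exact_mod_cast hq0
  have hmem := Finset.centerMass_mem_convexHull Φ (w := fun v => (q:ℝ) * μ v / t)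
    (fun v hv => by have := hpos v hv; positivity)
    (by rw [h1]; norm_num) (z := id) (fun v hv => Finset.mem_coe.mpr hv)
  rwa [Finset.centerMass_eq_of_sum_1 _ id h1,
    show (∑ v ∈ Φ, ((q:ℝ) * μ v / t) • id v) = ∑ v ∈ Φ, ((q:ℝ) * μ v / t) • v from rfl,
    h2] at hmem

/-- Step A: decomposition of the Ehrhart series over the open simplices of `K`. -/
lemma ehr_decomp {P : Set (Fin d → ℝ)} (K : Geometry.SimplicialComplex ℝ (Fin d → ℝ))
    (hspace : K.space = P) {q : ℕ} (hq0 : 0 < q) (hPne : P.Nonempty)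
    (hKfin : K.faces.Finite) :
    ehr P = 1 + ∑ Φ ∈ hKfin.toFinset, ser (coneLat q Φ Φ) := by
  have hqR : (0:ℝ) < q := by exact_mod_cast hq0
  ext t
  rw [ehr, PowerSeries.coeff_mk, map_add, PowerSeries.coeff_one, map_sum]
  simp only [ser, PowerSeries.coeff_mk]
  rcases Nat.eq_zero_or_pos t with rfl | ht
  · rw [if_pos rfl]
    have h1 : latticeCount P 0 = 1 := by
      have hz : ((0:ℕ):ℝ) • P = 0 := by rw [Nat.cast_zero]; exact Set.zero_smul_set hPne
      have hset : {v : Fin d → ℝ | v ∈ ((0:ℕ):ℝ) • P ∧ IsLatticePt v} = {0} := by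
        ext v
        simp only [Set.mem_setOf_eq, hz, Set.mem_zero, Set.mem_singleton_iff]
        constructor
        · rintro ⟨h, _⟩; exact h
        · rintro rfl; exact ⟨rfl, fun i => ⟨0, by simp⟩⟩
      rw [latticeCount, hset, Set.ncard_singleton]
    rw [h1]
    have h3 : ∀ Φ ∈ hKfin.toFinset, ((secEq (coneLat q Φ Φ) 0).ncard : ℤ) = 0 := by
      intro Φ hΦ
      have hΦface : Φ ∈ K.faces := (Set.Finite.mem_toFinset hKfin).mp hΦ
      have hΦne : Φ.Nonempty :=
        Finset.nonempty_of_ne_empty (fun h => K.empty_notMem (h ▸ hΦface))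
      have hempty : secEq (coneLat q Φ Φ) 0 = ∅ := by
        ext p
        simp only [Set.mem_empty_iff_false, iff_false]
        rintro ⟨⟨hlat, μ, hpos, hle, hrep⟩, hht⟩
        have h4 : p.2 = ∑ v ∈ Φ, μ v * q := by rw [hrep, ray_sum_snd]
        have h5 : 0 < ∑ v ∈ Φ, μ v * q :=
          Finset.sum_pos (fun v hv => mul_pos (hpos v hv) hqR) hΦne
        rw [hht] at h4
        simp only [Nat.cast_zero] at h4
        linarith [h4 ▸ h5]
      rw [hempty, Set.ncard_empty, Nat.cast_zero]
    rw [Finset.sum_congr rfl h3, Finset.sum_const, smul_zero]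
    norm_num
  · rw [if_neg ht.ne']
    have htR : (0:ℝ) < t := by exact_mod_cast ht
    have hinj : Function.Injective (fun x : Fin d → ℝ => (x, (t : ℝ))) :=
      fun a b h => congrArg Prod.fst h
    have himg : (fun x : Fin d → ℝ => (x, (t:ℝ))) '' {v | v ∈ (t:ℝ) • P ∧ IsLatticePt v}
        = ⋃ Φ ∈ hKfin.toFinset, secEq (coneLat q Φ Φ) t := by
      ext p
      constructor
      · rintro ⟨x, ⟨hxP, hxlat⟩, rfl⟩
        rw [Set.mem_smul_set] at hxP
        obtain ⟨y, hyP, rfl⟩ := hxP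
        rw [← hspace, Geometry.SimplicialComplex.mem_space_iff] at hyP
        obtain ⟨s, hs, hys⟩ := hyP
        rw [Finset.convexHull_eq] at hys
        obtain ⟨w, hw0, hw1, hwy⟩ := hys
        rw [Finset.centerMass_eq_of_sum_1 _ id hw1] at hwy
        simp only [id] at hwy
        set Φ := s.filter (fun v => w v ≠ 0) with hΦdef
        have hΦs : Φ ⊆ s := Finset.filter_subset _ _
        have hsumΦ : ∑ v ∈ Φ, w v = 1 := by
          rw [hΦdef, Finset.sum_filter_ne_zero, hw1]
        have hΦne : Φ ≠ ∅ := by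
          intro h
          rw [h, Finset.sum_empty] at hsumΦ
          exact one_ne_zero hsumΦ.symm
        have hΦface : Φ ∈ K.faces := K.down_closed hs hΦs (Finset.nonempty_iff_ne_empty.mpr hΦne)
        have hvecΦ : ∑ v ∈ Φ, w v • v = y := by
          rw [← hwy]
          apply Finset.sum_subset hΦs
          intro x hxs hxΦ
          have hx0 : w x = 0 := by
            by_contra hne0
            exact hxΦ (Finset.mem_filter.mpr ⟨hxs, hne0⟩)
          rw [hx0, zero_smul]
        apply Set.mem_biUnion ((Set.Finite.mem_toFinset hKfin).mpr hΦface)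
        refine ⟨⟨⟨hxlat, ⟨(t:ℤ), by push_cast; rfl⟩⟩, ?_⟩, rfl⟩
        refine ⟨fun v => (t:ℝ) * w v / q, ?_, ?_, ?_⟩
        · intro v hv
          have hw : w v ≠ 0 := (Finset.mem_filter.mp hv).2
          have hw' : 0 < w v := lt_of_le_of_ne (hw0 v (hΦs hv)) (Ne.symm hw)
          positivity
        · intro v hv hv'
          exact absurd hv hv'
        · apply Prod.ext
          · rw [ray_sum_fst]
            show (t:ℝ) • y = ∑ v ∈ Φ, ((t:ℝ) * w v / q * q) • v
            have hc : ∀ v ∈ Φ, ((t:ℝ) * w v / q * q) • v = (t:ℝ) • (w v • v) := by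
              intro v _
              rw [smul_smul]
              congr 1
              field_simp
            rw [Finset.sum_congr rfl hc, ← Finset.smul_sum, hvecΦ]
          · rw [ray_sum_snd]
            show (t:ℝ) = ∑ v ∈ Φ, (t:ℝ) * w v / q * q
            have hc : ∀ v ∈ Φ, (t:ℝ) * w v / q * q = (t:ℝ) * w v := by
              intro v _
              field_simp
            rw [Finset.sum_congr rfl hc, ← Finset.mul_sum, hsumΦ, mul_one]
      · intro hp
        rw [Set.mem_iUnion₂] at hp
        obtain ⟨Φ, hΦF, ⟨hlat, μ, hpos, hle, hrep⟩, hht⟩ := hp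
        have hΦface := (Set.Finite.mem_toFinset hKfin).mp hΦF
        have hy := cone_pt_hull hq0 μ hpos hrep ht hht
        have hyP : (t:ℝ)⁻¹ • p.1 ∈ P := by
          rw [← hspace]
          exact Geometry.SimplicialComplex.convexHull_subset_space hΦface hy
        refine ⟨p.1, ⟨?_, hlat.1⟩, Prod.ext rfl hht.symm⟩
        rw [Set.mem_smul_set]
        exact ⟨(t:ℝ)⁻¹ • p.1, hyP, smul_inv_smul₀ htR.ne' p.1⟩
    have hcount : latticeCount P t = ∑ Φ ∈ hKfin.toFinset, (secEq (coneLat q Φ Φ) t).ncard := by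
      rw [latticeCount, ← Set.ncard_image_of_injective _ hinj, himg]
      apply ncard_partition
      · intro Φ _
        exact secEq_coneLat_finite Φ Φ t
      · intro Φ₁ h₁ Φ₂ h₂ hnee
        rw [Set.disjoint_left]
        rintro p ⟨⟨hlat₁, μ₁, hpos₁, hle₁, hrep₁⟩, hht⟩ ⟨⟨hlat₂, μ₂, hpos₂, hle₂, hrep₂⟩, _⟩
        have hf₁ := (Set.Finite.mem_toFinset hKfin).mp h₁
        have hf₂ := (Set.Finite.mem_toFinset hKfin).mp h₂
        have hy₁ := cone_pt_hull hq0 μ₁ hpos₁ hrep₁ ht hht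
        have hy₂ := cone_pt_hull hq0 μ₂ hpos₂ hrep₂ ht hht
        have hyI := K.inter_subset_convexHull hf₁ hf₂ ⟨hy₁, hy₂⟩
        rw [← Finset.coe_inter, Finset.convexHull_eq] at hyI
        obtain ⟨w, hw0, hw1, hwy⟩ := hyI
        rw [Finset.centerMass_eq_of_sum_1 _ id hw1] at hwy
        simp only [id] at hwy
        have hsub : ∀ (Φa : Finset (Fin d → ℝ)) (μa : (Fin d → ℝ) → ℝ),
            AffineIndependent ℝ ((↑) : ↑Φa → (Fin d → ℝ)) →
            (∀ v ∈ Φa, 0 < μa v) →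
            p = ∑ v ∈ Φa, μa v • rayGen q v →
            Φ₁ ∩ Φ₂ ⊆ Φa → Φa ⊆ Φ₁ ∩ Φ₂ := by
          intro Φa μa hindep hposa hrepa hIa
          have hconva := cone_pt_convex hq0 μa hrepa ht hht
          have hIcap : Φa ∩ (Φ₁ ∩ Φ₂) = Φ₁ ∩ Φ₂ := Finset.inter_eq_right.mpr hIa
          have hsumb : ∑ v ∈ Φa, (if v ∈ Φ₁ ∩ Φ₂ then w v else 0) = 1 := by
            rw [Finset.sum_ite_mem, hIcap, hw1]
          have hvecb : ∑ v ∈ Φa, (if v ∈ Φ₁ ∩ Φ₂ then w v else 0) • v = (t:ℝ)⁻¹ • p.1 := by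
            have hc : ∀ v ∈ Φa, (if v ∈ Φ₁ ∩ Φ₂ then w v else 0) • v
                = (if v ∈ Φ₁ ∩ Φ₂ then w v • v else 0) := by
              intro v _
              rw [ite_smul, zero_smul]
            rw [Finset.sum_congr rfl hc, Finset.sum_ite_mem, hIcap, hwy]
          have heq := rep_eq hindep (a := fun v => (q:ℝ) * μa v / t)
            (b := fun v => if v ∈ Φ₁ ∩ Φ₂ then w v else 0)
            (by rw [hconva.1, hsumb]) (by rw [hconva.2, hvecb])
          intro v hv
          by_contra hv2
          have h0 : (q:ℝ) * μa v / t = (if v ∈ Φ₁ ∩ Φ₂ then w v else 0) := heq v hv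
          rw [if_neg hv2] at h0
          have hposv : 0 < (q:ℝ) * μa v / t := by
            have := hposa v hv
            positivity
          rw [h0] at hposv
          exact lt_irrefl 0 hposv
        have e₁ : Φ₁ ⊆ Φ₁ ∩ Φ₂ :=
          hsub Φ₁ μ₁ (K.indep hf₁) hpos₁ hrep₁ Finset.inter_subset_left
        have e₂ : Φ₂ ⊆ Φ₁ ∩ Φ₂ :=
          hsub Φ₂ μ₂ (K.indep hf₂) hpos₂ hrep₂ Finset.inter_subset_right
        exact hnee (Finset.Subset.antisymm (e₁.trans Finset.inter_subset_right)
          (e₂.trans Finset.inter_subset_left))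
    rw [hcount]
    push_cast
    ring

end StepA

/-- **Rational Betke–McMullen decomposition** (Theorem `decomp`).
For a triangulation `T` (realized as a geometric simplicial complex `K` whose underlying
space is `P`) with denominator `q` of a rational `d`-polytope `P ⊂ ℝ^d`, the Ehrhart
series of `P` satisfies
`Ehr(P;z) = (∑_{Ω ∈ T} B(Ω;z) · h_T(Ω;z^q)) / (1 − z^q)^{d+1}`,
i.e. `Ehr(P;z) · (1 − z^q)^{d+1} = ∑_{Ω ∈ T} B(Ω;z) · h_T(Ω;z^q)`, where the sum runs
over all faces `Ω` of `T` including the empty face. -/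
theorem rational_Betke_McMullen {d : ℕ} (P : Set (Fin d → ℝ))
    (hP : IsRationalPolytope P) (hdim : affineSpan ℝ P = ⊤)
    (K : Geometry.SimplicialComplex ℝ (Fin d → ℝ)) (hspace : K.space = P)
    (q : ℕ) (hq : IsDenominator q K.vertices) :
    ehr P * (1 - PowerSeries.X ^ q) ^ (d + 1)
      = ((∑ᶠ Ω ∈ facesE K,
            boxPoly q Ω * (hPoly d (facesE K) Ω).comp (Polynomial.X ^ q) :
          Polynomial ℤ) : PowerSeries ℤ) := by
  classical
  obtain ⟨hq0, hclear, -⟩ := hq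
  have hqR : (0:ℝ) < q := by exact_mod_cast hq0
  have hPne : P.Nonempty := by
    rcases Set.eq_empty_or_nonempty P with h | h
    · exfalso
      rw [h, AffineSubspace.span_empty] at hdim
      exact AffineSubspace.bot_ne_top ℝ (Fin d → ℝ) (Fin d → ℝ) hdim
    · exact h
  have hPbdd : ∃ C : ℝ, 0 ≤ C ∧ ∀ x ∈ P, ∀ i, |x i| ≤ C := by
    obtain ⟨V, hVrat, hPhull⟩ := hP
    obtain ⟨C, hC0, hC⟩ := exists_coord_bound V
    refine ⟨C, hC0, ?_⟩
    intro x hx i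
    rw [hPhull, Finset.convexHull_eq] at hx
    obtain ⟨w, hw0, hw1, hwx⟩ := hx
    rw [Finset.centerMass_eq_of_sum_1 _ id hw1] at hwx
    simp only [id] at hwx
    have hxi : x i = ∑ v ∈ V, w v * v i := by
      rw [← hwx, Finset.sum_apply]
      exact Finset.sum_congr rfl fun v _ => rfl
    rw [hxi]
    calc |∑ v ∈ V, w v * v i| ≤ ∑ v ∈ V, |w v * v i| := Finset.abs_sum_le_sum_abs _ _
    _ ≤ ∑ v ∈ V, w v * C := by
          apply Finset.sum_le_sum
          intro v hv
          rw [abs_mul, abs_of_nonneg (hw0 v hv)]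
          exact mul_le_mul_of_nonneg_left (hC v hv i) (hw0 v hv)
    _ = (∑ v ∈ V, w v) * C := by rw [Finset.sum_mul]
    _ = C := by rw [hw1, one_mul]
  obtain ⟨C, hC0, hCP⟩ := hPbdd
  have hVfin : K.vertices.Finite := by
    apply Set.Finite.of_finite_image (f := fun v : Fin d → ℝ => (q:ℝ) • v)
    · apply finite_of_lattice_bounded ((q:ℝ) * C)
      · rintro x ⟨v, hv, rfl⟩ i
        show |(q:ℝ) • v i| ≤ (q:ℝ) * C
        rw [smul_eq_mul, abs_mul, abs_of_nonneg hqR.le]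
        have hvP : v ∈ P := by
          rw [← hspace]
          exact Geometry.SimplicialComplex.vertices_subset_space hv
        exact mul_le_mul_of_nonneg_left (hCP v hvP i) hqR.le
      · rintro x ⟨v, hv, rfl⟩ i
        obtain ⟨n, hn⟩ := hclear v hv i
        exact ⟨n, by show (q:ℝ) • v i = (n:ℝ); rw [smul_eq_mul, hn]⟩
    · exact (smul_right_injective (Fin d → ℝ) hqR.ne').injOn
  have hKfin : K.faces.Finite := by
    apply Set.Finite.subset (hVfin.toFinset.powerset : Finset _).finite_toSet
    intro s hs
    rw [Finset.mem_coe, Finset.mem_powerset]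
    intro x hx
    rw [Set.Finite.mem_toFinset]
    exact K.down_closed hs (Finset.singleton_subset_iff.mpr hx) (Finset.singleton_nonempty x)
  have hfaceF : ∀ Φ : Finset (Fin d → ℝ), Φ ∈ hKfin.toFinset ↔ Φ ∈ K.faces :=
    fun Φ => Set.Finite.mem_toFinset hKfin
  have hind : ∀ Φ ∈ hKfin.toFinset, AffineIndependent ℝ ((↑) : ↑Φ → (Fin d → ℝ)) :=
    fun Φ hΦ => K.indep ((hfaceF Φ).mp hΦ)
  have hqint : ∀ Φ ∈ hKfin.toFinset, ∀ v ∈ Φ, ∀ i, ∃ n : ℤ, (q:ℝ) * v i = n := by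
    intro Φ hΦ v hv i
    have hvx : v ∈ K.vertices :=
      K.down_closed ((hfaceF Φ).mp hΦ) (Finset.singleton_subset_iff.mpr hv)
        (Finset.singleton_nonempty v)
    exact hclear v hvx i
  have hcard : ∀ Φ ∈ hKfin.toFinset, Φ.card ≤ d + 1 := by
    intro Φ hΦ
    have h1 := (hind Φ hΦ).card_le_finrank_succ
    rw [Fintype.card_coe] at h1
    have h2 := Submodule.finrank_le (vectorSpan ℝ (Set.range ((↑) : ↑Φ → (Fin d → ℝ))))
    rw [Module.finrank_fin_fun] at h2
    omega
  have hemptyF : ∅ ∉ hKfin.toFinset := fun h => K.empty_notMem ((hfaceF ∅).mp h)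
  -- the left-hand side
  have hLHS : ehr P * (1 - PowerSeries.X ^ q) ^ (d + 1)
      = (1 - PowerSeries.X ^ q) ^ (d + 1)
        + ∑ Φ ∈ hKfin.toFinset, ((HB q Φ : Polynomial ℤ) : PowerSeries ℤ)
            * (1 - PowerSeries.X ^ q) ^ (d + 1 - Φ.card) := by
    rw [ehr_decomp K hspace hq0 hPne hKfin, add_mul, one_mul, Finset.sum_mul]
    congr 1
    apply Finset.sum_congr rfl
    intro Φ hΦ
    rw [ser_coneLat_subset hq0 (hind Φ hΦ) (hqint Φ hΦ) Φ (subset_refl Φ),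
      ser_coneLat_empty' hq0 (hind Φ hΦ) (hqint Φ hΦ)]
    have hsplit : (1 - PowerSeries.X ^ q : PowerSeries ℤ) ^ (d + 1)
        = (1 - PowerSeries.X ^ q) ^ Φ.card * (1 - PowerSeries.X ^ q) ^ (d + 1 - Φ.card) := by
      rw [← pow_add]
      congr 1
      have := hcard Φ hΦ
      omega
    rw [hsplit]
    rw [show ((HB q Φ : Polynomial ℤ) : PowerSeries ℤ) * G q ^ Φ.card *
          ((1 - PowerSeries.X ^ q) ^ Φ.card * (1 - PowerSeries.X ^ q) ^ (d + 1 - Φ.card))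
        = ((HB q Φ : Polynomial ℤ) : PowerSeries ℤ)
          * ((G q ^ Φ.card * (1 - PowerSeries.X ^ q) ^ Φ.card)
              * (1 - PowerSeries.X ^ q) ^ (d + 1 - Φ.card)) from by ring]
    rw [← mul_pow, mul_comm (G q), one_sub_X_pow_mul_G hq0, one_pow, one_mul]
  -- the right-hand side
  have hFE : facesE K = ↑(insert ∅ hKfin.toFinset) := by
    show insert ∅ K.faces = _
    rw [Finset.coe_insert, Set.Finite.coe_toFinset]
  have hfs : (∑ᶠ Ω ∈ facesE K,
        boxPoly q Ω * (hPoly d (facesE K) Ω).comp (Polynomial.X ^ q) : Polynomial ℤ)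
      = ∑ Ω ∈ insert ∅ hKfin.toFinset,
          boxPoly q Ω * (hPoly d (facesE K) Ω).comp (Polynomial.X ^ q) := by
    have h := finsum_mem_coe_finset
      (fun Ω => boxPoly q Ω * (hPoly d (facesE K) Ω).comp (Polynomial.X ^ q))
      (insert ∅ hKfin.toFinset)
    rw [← hFE] at h
    exact h
  have hhP : ∀ Ω : Finset (Fin d → ℝ), hPoly d (facesE K) Ω
      = ∑ Φ ∈ (insert ∅ hKfin.toFinset).filter (fun Φ => Ω ⊆ Φ),
          Polynomial.X ^ (Φ.card - Ω.card) * (1 - Polynomial.X) ^ (d + 1 - Φ.card) := by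
    intro Ω
    have hsets : {Φ : Finset (Fin d → ℝ) | Φ ∈ facesE K ∧ Ω ⊆ Φ}
        = ↑((insert ∅ hKfin.toFinset).filter (fun Φ => Ω ⊆ Φ)) := by
      ext Φ
      rw [Set.mem_setOf_eq, hFE]
      simp [Finset.mem_filter, Finset.mem_coe]
    show (∑ᶠ Φ ∈ {Φ : Finset (Fin d → ℝ) | Φ ∈ facesE K ∧ Ω ⊆ Φ},
        Polynomial.X ^ (Φ.card - Ω.card) * (1 - Polynomial.X) ^ (d + 1 - Φ.card)) = _
    rw [hsets, finsum_mem_coe_finset]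
  have hps : ∀ Φ ∈ insert ∅ hKfin.toFinset,
      (insert ∅ hKfin.toFinset).filter (fun Ω => Ω ⊆ Φ) = Φ.powerset := by
    intro Φ hΦ
    apply Finset.ext
    intro Ω
    rw [Finset.mem_filter, Finset.mem_powerset]
    constructor
    · exact fun h => h.2
    · intro hsubΩ
      refine ⟨?_, hsubΩ⟩
      rcases Finset.eq_empty_or_nonempty Ω with rfl | hΩne
      · exact Finset.mem_insert_self _ _
      · rcases Finset.mem_insert.mp hΦ with rfl | hΦF
        · rw [Finset.subset_empty] at hsubΩ
          exact absurd hsubΩ hΩne.ne_empty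
        · exact Finset.mem_insert_of_mem
            ((hfaceF Ω).mpr (K.down_closed ((hfaceF Φ).mp hΦF) hsubΩ hΩne))
  have hcomp : ∀ Ω : Finset (Fin d → ℝ), (hPoly d (facesE K) Ω).comp (Polynomial.X ^ q)
      = ∑ Φ ∈ (insert ∅ hKfin.toFinset).filter (fun Φ => Ω ⊆ Φ),
          Polynomial.X ^ (q * (Φ.card - Ω.card))
            * (1 - Polynomial.X ^ q) ^ (d + 1 - Φ.card) := by
    intro Ω
    rw [hhP Ω, finset_sum_comp]
    apply Finset.sum_congr rfl
    intro Φ _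
    rw [Polynomial.mul_comp, Polynomial.pow_comp, Polynomial.pow_comp, Polynomial.sub_comp,
      Polynomial.one_comp, Polynomial.X_comp, ← pow_mul]
  have hswap : ∑ Ω ∈ insert ∅ hKfin.toFinset,
        boxPoly q Ω * (hPoly d (facesE K) Ω).comp (Polynomial.X ^ q)
      = (1 - Polynomial.X ^ q) ^ (d + 1)
        + ∑ Φ ∈ hKfin.toFinset, HB q Φ * (1 - Polynomial.X ^ q) ^ (d + 1 - Φ.card) := by
    have step1 : ∑ Ω ∈ insert ∅ hKfin.toFinset,
          boxPoly q Ω * (hPoly d (facesE K) Ω).comp (Polynomial.X ^ q)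
        = ∑ Ω ∈ insert ∅ hKfin.toFinset, ∑ Φ ∈ insert ∅ hKfin.toFinset,
            (if Ω ⊆ Φ then boxPoly q Ω * (Polynomial.X ^ (q * (Φ.card - Ω.card))
              * (1 - Polynomial.X ^ q) ^ (d + 1 - Φ.card)) else 0) := by
      apply Finset.sum_congr rfl
      intro Ω _
      rw [hcomp Ω, Finset.mul_sum, Finset.sum_filter]
    have step2 : ∀ Φ ∈ insert ∅ hKfin.toFinset,
        (∑ Ω ∈ insert ∅ hKfin.toFinset,
          if Ω ⊆ Φ then boxPoly q Ω * (Polynomial.X ^ (q * (Φ.card - Ω.card))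
            * (1 - Polynomial.X ^ q) ^ (d + 1 - Φ.card)) else 0)
        = HB q Φ * (1 - Polynomial.X ^ q) ^ (d + 1 - Φ.card) := by
      intro Φ hΦ
      rw [← Finset.sum_filter, hps Φ hΦ, HB_def, Finset.sum_mul]
      apply Finset.sum_congr rfl
      intro Ω _
      ring
    rw [step1, Finset.sum_comm, Finset.sum_congr rfl step2, Finset.sum_insert hemptyF]
    congr 1
    rw [HB_def, Finset.powerset_empty, Finset.sum_singleton, boxPoly_empty]
    simp
  have hcast : (((1 - Polynomial.X ^ q) ^ (d + 1)
        + ∑ Φ ∈ hKfin.toFinset, HB q Φ * (1 - Polynomial.X ^ q) ^ (d + 1 - Φ.card) :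
          Polynomial ℤ) : PowerSeries ℤ)
      = (1 - PowerSeries.X ^ q) ^ (d + 1)
        + ∑ Φ ∈ hKfin.toFinset, ((HB q Φ : Polynomial ℤ) : PowerSeries ℤ)
            * (1 - PowerSeries.X ^ q) ^ (d + 1 - Φ.card) := by
    rw [← Polynomial.coeToPowerSeries.ringHom_apply]
    simp only [map_add, map_sum, map_mul, map_pow, map_sub, map_one,
      Polynomial.coeToPowerSeries.ringHom_apply, Polynomial.coe_X]
  rw [hLHS, hfs, hswap, hcast]

end RationalEhrhart
end

section
/- Let P be a rational d-polytope, T a boundary triangulation of P with denominator q, and (a,ℓ) ∈ ℤ^{d+1} with a/ℓ an interior point of P (ℓ a positive integer). Then for each face Δ of T with integral ray generators W = {(r_1,q),…,(r_{m+1},q)} of cone(Δ) at height q, one has B(Δ;z) = z^{q(dim Δ + 1)} B(Δ;1/z), and, with Δ' corresponding to the generator set W ∪ {(a,ℓ)}, one has B(Δ';z) = z^{q(dim Δ + 1) + ℓ} B(Δ';1/z). -/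
open scoped BigOperators Pointwise

namespace RationalEhrhart

lemma exists_int_sum {α : Type*} (s : Finset α) (f : α → ℝ)
    (h : ∀ x ∈ s, ∃ n : ℤ, f x = (n : ℝ)) : ∃ n : ℤ, ∑ x ∈ s, f x = (n : ℝ) := by
  classical
  induction s using Finset.induction with
  | empty => exact ⟨0, by simp⟩
  | @insert b t hx ih =>
    obtain ⟨m, hm⟩ := h b (Finset.mem_insert_self _ _)
    obtain ⟨n, hn⟩ := ih (fun x hx' => h x (Finset.mem_insert_of_mem hx'))
    exact ⟨m + n, by rw [Finset.sum_insert hx, hm, hn]; push_cast; ring⟩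

/-- Key symmetry lemma: if `c` is a lattice point of height `N` and `p ↦ c - p`
maps `S` into itself, then `genLaurent S = T N * genLaurentInv S`. -/
lemma genLaurent_palin {d : ℕ} {S : Set ((Fin d → ℝ) × ℝ)} (c : (Fin d → ℝ) × ℝ)
    (hc : IsLatticePtC c) (N : ℤ) (hN : c.2 = (N : ℝ))
    (hinv : ∀ p ∈ S, c - p ∈ S) :
    genLaurent S = LaurentPolynomial.T N * genLaurentInv S := by
  classical
  set s : Set ((Fin d → ℝ) × ℝ) := {p | p ∈ S ∧ IsLatticePtC p} with hs
  have hmaps : ∀ p ∈ s, c - p ∈ s := by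
    rintro p ⟨hpS, hp1, hp2⟩
    refine ⟨hinv p hpS, ?_, ?_⟩
    · intro i
      obtain ⟨m, hm⟩ := hc.1 i
      obtain ⟨n, hn⟩ := hp1 i
      refine ⟨m - n, ?_⟩
      have : (c - p).1 i = c.1 i - p.1 i := rfl
      rw [this, hm, hn]; push_cast; ring
    · obtain ⟨m, hm⟩ := hc.2
      obtain ⟨n, hn⟩ := hp2
      refine ⟨m - n, ?_⟩
      have : (c - p).2 = c.2 - p.2 := rfl
      rw [this, hm, hn]; push_cast; ring
  have hbij : Set.BijOn (fun p => c - p) s s := by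
    refine ⟨hmaps, ?_, ?_⟩
    · intro p _ r _ h
      simpa using sub_right_injective h
    · intro p hp
      exact ⟨c - p, hmaps p hp, by simp⟩
  have key : ∀ p ∈ s,
      (LaurentPolynomial.T N * LaurentPolynomial.T (-⌊p.2⌋) : LaurentPolynomial ℤ)
        = LaurentPolynomial.T ⌊(c - p).2⌋ := by
    rintro p ⟨-, -, n, hn⟩
    have h2 : (c - p).2 = ((N - n : ℤ) : ℝ) := by
      have : (c - p).2 = c.2 - p.2 := rfl
      rw [this, hN, hn]; push_cast; ring
    have hfp : ⌊p.2⌋ = n := by rw [hn, Int.floor_intCast]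
    have he : N + -⌊p.2⌋ = N - n := by rw [hfp]; ring
    rw [← LaurentPolynomial.T_add, he, h2, Int.floor_intCast]
  have h1 : (∑ᶠ p ∈ s, LaurentPolynomial.T N * LaurentPolynomial.T (-⌊p.2⌋) :
      LaurentPolynomial ℤ) = genLaurent S := by
    rw [genLaurent]
    exact finsum_mem_eq_of_bijOn (fun p => c - p) hbij key
  rw [← h1, genLaurentInv, ← hs]
  by_cases hfin : s.Finite
  · rw [← hfin.coe_toFinset, finsum_mem_coe_finset, finsum_mem_coe_finset,
      Finset.mul_sum]
  · have hsupp : ∀ m : ℤ, (LaurentPolynomial.T m : LaurentPolynomial ℤ) ≠ 0 :=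
      fun m => (LaurentPolynomial.isUnit_T m).ne_zero
    have hz : ∀ f : ((Fin d → ℝ) × ℝ) → LaurentPolynomial ℤ,
        (∀ p ∈ s, f p ≠ 0) → (∑ᶠ p ∈ s, f p) = 0 := by
      intro f hf
      rw [finsum_mem_def]
      apply finsum_of_infinite_support
      refine Set.Infinite.mono ?_ hfin
      intro p hp
      simp only [Function.mem_support, Set.indicator_apply]
      rw [if_pos hp]
      exact hf p hp
    rw [hz _ (fun p hp => by
        intro h
        exact hsupp _ ((mul_eq_zero.mp h).resolve_left (hsupp N))),
      hz _ (fun p hp => hsupp _), mul_zero]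

/-- **Symmetry of box polynomials for boundary triangulations** (Corollary
`symmetry box polynomials`).  Let `P` be a rational `d`-polytope, `T` (realized by the
simplicial complex `K` with underlying space `∂P`) a boundary triangulation of `P`
with denominator `q`, and `(a,ℓ) ∈ ℤ^{d+1}` with `a/ℓ` an interior point of `P`.
Then for each face `Δ` of `T` one has `B(Δ;z) = z^{q(dim Δ + 1)} B(Δ;1/z)` and, with
`Δ'` corresponding to the generator set `W ∪ {(a,ℓ)}`,
`B(Δ';z) = z^{q(dim Δ + 1) + ℓ} B(Δ';1/z)` (identities of Laurent polynomials, with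
`q(dim Δ + 1) = q·#Δ`). -/
theorem box_polynomial_symmetry_boundary {d : ℕ} (P : Set (Fin d → ℝ))
    (hP : IsRationalPolytope P) (hdim : affineSpan ℝ P = ⊤)
    (K : Geometry.SimplicialComplex ℝ (Fin d → ℝ)) (hspace : K.space = frontier P)
    (q : ℕ) (hq : IsDenominator q K.vertices)
    (a : Fin d → ℝ) (ha : IsLatticePt a) (ℓ : ℕ) (hℓ : 0 < ℓ)
    (hint : (ℓ : ℝ)⁻¹ • a ∈ interior P) :
    ∀ Δ ∈ facesE K,
      genLaurent (faceBox q Δ)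
          = LaurentPolynomial.T ((q : ℤ) * Δ.card) * genLaurentInv (faceBox q Δ) ∧
      genLaurent (faceBoxA q (a, (ℓ : ℝ)) Δ)
          = LaurentPolynomial.T ((q : ℤ) * Δ.card + ℓ) *
              genLaurentInv (faceBoxA q (a, (ℓ : ℝ)) Δ) := by
  intro Δ hΔ
  classical
  -- vertices of Δ have denominators cleared by q
  have hvert : ∀ v ∈ Δ, ∀ i, ∃ n : ℤ, (q : ℝ) * v i = (n : ℝ) := by
    intro v hv i
    rcases hΔ with h | h
    · subst h; exact absurd hv (Finset.notMem_empty v)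
    · have hvK : v ∈ K.vertices :=
        K.down_closed h (Finset.singleton_subset_iff.mpr hv)
          (Finset.singleton_nonempty v)
      exact hq.2.1 v hvK i
  set c0 : (Fin d → ℝ) × ℝ := ∑ v ∈ Δ, rayGen q v with hc0
  have hc0fst : ∀ i, c0.1 i = ∑ v ∈ Δ, (q : ℝ) * v i := by
    intro i
    rw [hc0, Prod.fst_sum]
    rw [Finset.sum_apply]
    rfl
  have hc0snd : c0.2 = (Δ.card : ℝ) * q := by
    rw [hc0, Prod.snd_sum]
    simp [rayGen, Finset.sum_const, nsmul_eq_mul]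
  have hc0lat : IsLatticePtC c0 := by
    constructor
    · intro i
      rw [hc0fst i]
      exact exists_int_sum Δ _ (fun v hv => hvert v hv i)
    · exact ⟨(Δ.card : ℤ) * q, by rw [hc0snd]; push_cast; ring⟩
  have hwlat : IsLatticePtC ((a, (ℓ : ℝ)) : (Fin d → ℝ) × ℝ) :=
    ⟨fun i => ha i, ⟨(ℓ : ℤ), by push_cast; rfl⟩⟩
  constructor
  · apply genLaurent_palin c0 hc0lat ((q : ℤ) * Δ.card)
    · rw [hc0snd]; push_cast; ring
    · rintro p ⟨lam, hlam, rfl⟩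
      refine ⟨fun v => 1 - lam v, fun v hv =>
        ⟨by dsimp only; linarith [(hlam v hv).2],
         by dsimp only; linarith [(hlam v hv).1]⟩, ?_⟩
      rw [hc0, ← Finset.sum_sub_distrib]
      apply Finset.sum_congr rfl
      intro v _
      rw [sub_smul, one_smul]
  · have hc1lat : IsLatticePtC (c0 + (a, (ℓ : ℝ))) := by
      constructor
      · intro i
        obtain ⟨m, hm⟩ := hc0lat.1 i
        obtain ⟨n, hn⟩ := hwlat.1 i
        refine ⟨m + n, ?_⟩
        have : (c0 + (a, (ℓ : ℝ))).1 i = c0.1 i + a i := rfl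
        rw [this, hm, show a i = (n : ℝ) from hn]; push_cast; ring
      · obtain ⟨m, hm⟩ := hc0lat.2
        refine ⟨m + ℓ, ?_⟩
        have : (c0 + (a, (ℓ : ℝ))).2 = c0.2 + (ℓ : ℝ) := rfl
        rw [this, hm]; push_cast; ring
    apply genLaurent_palin (c0 + (a, (ℓ : ℝ))) hc1lat ((q : ℤ) * Δ.card + ℓ)
    · have : (c0 + (a, (ℓ : ℝ))).2 = c0.2 + (ℓ : ℝ) := rfl
      rw [this, hc0snd]; push_cast; ring
    · rintro p ⟨lam, cc, hlam, hcc0, hcc1, rfl⟩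
      refine ⟨fun v => 1 - lam v, 1 - cc, fun v hv =>
        ⟨by dsimp only; linarith [(hlam v hv).2],
         by dsimp only; linarith [(hlam v hv).1]⟩,
        by linarith, by linarith, ?_⟩
      have hsum : (∑ v ∈ Δ, (1 - lam v) • rayGen q v)
          = c0 - ∑ v ∈ Δ, lam v • rayGen q v := by
        rw [hc0, ← Finset.sum_sub_distrib]
        apply Finset.sum_congr rfl
        intro v _
        rw [sub_smul, one_smul]
      rw [hsum, sub_smul, one_smul]
      abel

end RationalEhrhart
end

section
/- Let P be a rational d-polytope, T a boundary triangulation of P with denominator q, and (a,ℓ) ∈ ℤ^{d+1} with a/ℓ an interior point of P. Given a lattice point v ∈ cone(P), let Δ = Δ(v) be the minimal face of T such that v ∈ cone(Δ'), with integral ray generators (r_1,q),…,(r_{m+1},q) at height q, write v = Σ_i λ_i (r_i,q) + λ(a,ℓ) with λ_i > 0, λ ≥ 0, let I(v) = {i : λ_i ∈ ℤ}, and set {v} = Σ_{i ∉ I(v)} {λ_i}(r_i,q) + {λ}(a,ℓ) (using fractional parts). Then v can be written uniquely in the form v = {v} + Σ_{i ∈ I(v)} (r_i,q) + Σ_{i=1}^{m+1}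 μ_i (r_i,q) + μ(a,ℓ) with μ, μ_1, …, μ_{m+1} nonnegative integers. -/
open scoped BigOperators Pointwise

namespace RationalEhrhart

open scoped Classical

/-- The cone generated by the height-`q` ray generators of the face with vertex set `Δ`
together with the extra generator `w = (a,ℓ)` (this is `cone(Δ')`). -/
def coneA {d : ℕ} (q : ℕ) (w : (Fin d → ℝ) × ℝ) (Δ : Finset (Fin d → ℝ)) :
    Set ((Fin d → ℝ) × ℝ) :=
  {p | ∃ (lam : (Fin d → ℝ) → ℝ) (c : ℝ), (∀ v ∈ Δ, 0 ≤ lam v) ∧ 0 ≤ c ∧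
        p = (∑ v ∈ Δ, lam v • rayGen q v) + c • w}


/-- Auxiliary geometric fact: an interior point of a closed convex set `P` cannot be an
affine combination of points of a finite set whose convex hull lies in the frontier. -/
theorem not_affine_comb_of_interior {d : ℕ} (P : Set (Fin d → ℝ)) (hconv : Convex ℝ P)
    (hclosed : IsClosed P)
    (x : Fin d → ℝ) (hx : x ∈ interior P)
    (Δ : Finset (Fin d → ℝ)) (hΔ : (convexHull ℝ (Δ : Set (Fin d → ℝ))) ⊆ frontier P)
    (c : (Fin d → ℝ) → ℝ) (hc1 : ∑ w ∈ Δ, c w = 1) (hxc : x = ∑ w ∈ Δ, c w • w) : False := by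
  have hne : Δ.Nonempty := by
    rcases Δ.eq_empty_or_nonempty with h | h
    · simp [h] at hc1
    · exact h
  have hnpos : 0 < (Δ.card : ℝ) := by exact_mod_cast Finset.card_pos.2 hne
  have hn0 : (Δ.card : ℝ) ≠ 0 := hnpos.ne'
  obtain ⟨ε, hεpos, hupos⟩ : ∃ ε : ℝ, 0 < ε ∧
      ∀ w ∈ Δ, 0 < (1 + ε) / (Δ.card : ℝ) - ε * c w := by
    have hS1 : (1 : ℝ) ≤ ∑ w ∈ Δ, |c w| := by
      calc (1:ℝ) = |∑ w ∈ Δ, c w| := by rw [hc1]; simp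
      _ ≤ ∑ w ∈ Δ, |c w| := Finset.abs_sum_le_sum_abs _ _
    have hSpos : (0:ℝ) < ∑ w ∈ Δ, |c w| := lt_of_lt_of_le one_pos hS1
    refine ⟨1 / (2 * (Δ.card : ℝ) * ∑ w ∈ Δ, |c w|), by positivity, fun w hw => ?_⟩
    set ε := 1 / (2 * (Δ.card : ℝ) * ∑ w ∈ Δ, |c w|) with hε
    have hεpos : 0 < ε := by rw [hε]; positivity
    have h1 : ε * c w ≤ ε * ∑ w ∈ Δ, |c w| := by
      apply mul_le_mul_of_nonneg_left _ hεpos.le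
      calc c w ≤ |c w| := le_abs_self _
      _ ≤ ∑ w ∈ Δ, |c w| := Finset.single_le_sum (fun i _ => abs_nonneg (c i)) hw
    have h2 : ε * ∑ w ∈ Δ, |c w| = 1 / (2 * (Δ.card : ℝ)) := by
      rw [hε]; field_simp
    have h3 : ε * c w < (1 + ε) / (Δ.card : ℝ) := by
      rw [h2] at h1
      refine lt_of_le_of_lt h1 ?_
      rw [div_lt_div_iff₀ (by positivity) hnpos]
      nlinarith
    linarith
  have h1ε : (0:ℝ) < 1 + ε := by positivity
  have husum : ∑ w ∈ Δ, ((1 + ε) / (Δ.card : ℝ) - ε * c w) = 1 := by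
    rw [Finset.sum_sub_distrib, ← Finset.mul_sum, hc1, mul_one, Finset.sum_const,
      nsmul_eq_mul]
    field_simp
    ring
  have hsum1n : ∑ _w ∈ Δ, (1 / (Δ.card : ℝ)) = 1 := by
    rw [Finset.sum_const, nsmul_eq_mul]
    exact mul_one_div_cancel hn0
  have hyP : ∑ w ∈ Δ, (1 / (Δ.card : ℝ)) • w ∈ convexHull ℝ (Δ : Set (Fin d → ℝ)) := by
    have := Finset.centerMass_mem_convexHull Δ (w := fun _ => 1/(Δ.card:ℝ))
      (fun i _ => by positivity) (by rw [hsum1n]; norm_num)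
      (fun i hi => Finset.mem_coe.2 hi) (z := id)
    rwa [Finset.centerMass_eq_of_sum_1 Δ id hsum1n] at this
  have hyεP : ∑ w ∈ Δ, ((1 + ε) / (Δ.card : ℝ) - ε * c w) • w ∈
      convexHull ℝ (Δ : Set (Fin d → ℝ)) := by
    have := Finset.centerMass_mem_convexHull Δ
      (w := fun w => (1 + ε) / (Δ.card : ℝ) - ε * c w)
      (fun i hi => (hupos i hi).le) (by rw [husum]; norm_num)
      (fun i hi => Finset.mem_coe.2 hi) (z := id)
    rwa [Finset.centerMass_eq_of_sum_1 Δ id husum] at this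
  have hcombo : ∑ w ∈ Δ, (1 / (Δ.card : ℝ)) • w =
      (ε / (1 + ε)) • x + (1 / (1 + ε)) • ∑ w ∈ Δ, ((1 + ε) / (Δ.card : ℝ) - ε * c w) • w := by
    rw [hxc, Finset.smul_sum, Finset.smul_sum, ← Finset.sum_add_distrib]
    refine Finset.sum_congr rfl fun w hw => ?_
    rw [smul_smul, smul_smul, ← add_smul]
    congr 1
    field_simp
    ring
  have hyεmem : ∑ w ∈ Δ, ((1 + ε) / (Δ.card : ℝ) - ε * c w) • w ∈ P := by
    have := hΔ hyεP
    rw [frontier, hclosed.closure_eq] at this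
    exact this.1
  have hyint : ∑ w ∈ Δ, (1 / (Δ.card : ℝ)) • w ∈ interior P := by
    rw [hcombo]
    exact hconv.combo_interior_self_mem_interior hx hyεmem (by positivity) (by positivity)
      (by rw [← add_div, add_comm, div_self h1ε.ne'])
  have hynot := hΔ hyP
  rw [frontier, hclosed.closure_eq] at hynot
  exact hynot.2 hyint

/-- **Unique representation lemma** (Lemma `lemma:unique sum`).  Let `P` be a rational
`d`-polytope, `T` (realized by `K`, with underlying space `∂P`) a boundary triangulation
of `P` with denominator `q`, and `(a,ℓ) ∈ ℤ^{d+1}` with `a/ℓ` an interior point of `P`.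
Given a lattice point `v` in `cone(P)`, let `Δ = Δ(v)` be the minimal face of `T` such
that `v ∈ cone(Δ')`, write `v = ∑ᵢ λᵢ (rᵢ,q) + λ(a,ℓ)` with `λᵢ > 0`, `λ ≥ 0`, let
`I(v) = {i : λᵢ ∈ ℤ}` and `{v} = ∑_{i ∉ I(v)} {λᵢ}(rᵢ,q) + {λ}(a,ℓ)` (fractional
parts).  Then `v` can be written **uniquely** in the form
`v = {v} + ∑_{i ∈ I(v)} (rᵢ,q) + ∑ᵢ μᵢ (rᵢ,q) + μ(a,ℓ)` with `μ, μᵢ` nonnegative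
integers. -/
theorem unique_representation {d : ℕ} (P : Set (Fin d → ℝ))
    (hP : IsRationalPolytope P) (hdim : affineSpan ℝ P = ⊤)
    (K : Geometry.SimplicialComplex ℝ (Fin d → ℝ)) (hspace : K.space = frontier P)
    (q : ℕ) (hq : IsDenominator q K.vertices)
    (a : Fin d → ℝ) (ha : IsLatticePt a) (ℓ : ℕ) (hℓ : 0 < ℓ)
    (hint : (ℓ : ℝ)⁻¹ • a ∈ interior P)
    (v : (Fin d → ℝ) × ℝ) (hvlat : IsLatticePtC v)
    (Δ : Finset (Fin d → ℝ)) (hΔ : Δ ∈ facesE K)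
    (hvΔ : v ∈ coneA q (a, (ℓ : ℝ)) Δ)
    (hminimal : ∀ Δ₀ ∈ facesE K, v ∈ coneA q (a, (ℓ : ℝ)) Δ₀ → Δ ⊆ Δ₀)
    (lam : (Fin d → ℝ) → ℝ) (lamA : ℝ)
    (hpos : ∀ w ∈ Δ, 0 < lam w) (hA : 0 ≤ lamA)
    (hv : v = (∑ w ∈ Δ, lam w • rayGen q w) + lamA • (a, (ℓ : ℝ))) :
    ∃! μ : ((Fin d → ℝ) → ℕ) × ℕ,
      (∀ w, w ∉ Δ → μ.1 w = 0) ∧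
      v = ((∑ w ∈ Δ, Int.fract (lam w) • rayGen q w) + Int.fract lamA • (a, (ℓ : ℝ)))
          + (∑ w ∈ Δ.filter fun w => ∃ n : ℤ, lam w = (n : ℝ), rayGen q w)
          + (∑ w ∈ Δ, (μ.1 w : ℝ) • rayGen q w) + (μ.2 : ℝ) • (a, (ℓ : ℝ)) := by
  classical
  have hqpos : 0 < (q:ℝ) := by exact_mod_cast hq.1
  have hq0 : (q:ℝ) ≠ 0 := hqpos.ne'
  have hℓ0 : ((ℓ:ℝ)) ≠ 0 := by
    have : (0:ℝ) < ℓ := by exact_mod_cast hℓ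
    exact this.ne'
  obtain ⟨V, hVrat, hPV⟩ := hP
  have hconv : Convex ℝ P := hPV ▸ convex_convexHull ℝ _
  have hclosed : IsClosed P := hPV ▸ V.finite_toSet.isClosed_convexHull (𝕜 := ℝ)
  have hΔfr : convexHull ℝ (Δ : Set (Fin d → ℝ)) ⊆ frontier P := by
    rcases Set.mem_insert_iff.1 hΔ with h | h
    · rw [h]; simp
    · rw [← hspace]; exact K.convexHull_subset_space h
  -- Key: the generators indexed by `Δ` together with `(a,ℓ)` are linearly independent.
  have key : ∀ (c : (Fin d → ℝ) → ℝ) (t : ℝ),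
      ((∑ w ∈ Δ, c w • rayGen q w) + t • ((a, (ℓ:ℝ)) : (Fin d → ℝ) × ℝ) = 0) →
      (∀ w ∈ Δ, c w = 0) ∧ t = 0 := by
    intro c t hct
    have h2 : (∑ w ∈ Δ, c w * q) + t * ℓ = 0 := by
      have := congrArg Prod.snd hct
      simpa [rayGen, Prod.snd_sum, smul_eq_mul] using this
    have h1 : (∑ w ∈ Δ, (c w * q) • w) + (t * ℓ) • ((ℓ:ℝ)⁻¹ • a) = 0 := by
      have h := congrArg Prod.fst hct
      simp only [Prod.fst_add, Prod.fst_sum, Prod.smul_fst, rayGen, Prod.fst_zero] at h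
      have e1 : ∀ w, c w • ((q:ℝ) • w) = (c w * q) • w := fun w => smul_smul _ _ _
      have e2 : (t * ℓ) • ((ℓ:ℝ)⁻¹ • a) = t • a := by
        rw [smul_smul, mul_assoc, mul_inv_cancel₀ hℓ0, mul_one]
      rw [e2]
      simpa only [e1] using h
    have hT : t * ℓ = 0 := by
      by_contra hT
      refine not_affine_comb_of_interior P hconv hclosed ((ℓ:ℝ)⁻¹ • a) hint Δ hΔfr
        (fun w => -(c w * q) / (t * ℓ)) ?_ ?_
      · have hs : ∑ w ∈ Δ, c w * q = -(t * ℓ) := by linarith [h2]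
        rw [← Finset.sum_div, Finset.sum_neg_distrib, hs, neg_neg, div_self hT]
      · have hTx : (t * ℓ) • ((ℓ:ℝ)⁻¹ • a) = ∑ w ∈ Δ, (-(c w * q)) • w := by
          have := eq_neg_of_add_eq_zero_right h1
          rw [this, ← Finset.sum_neg_distrib]
          exact Finset.sum_congr rfl fun w _ => (neg_smul _ _).symm
        have hneg : ((ℓ:ℝ)⁻¹ • a) = (t*ℓ)⁻¹ • ((t * ℓ) • ((ℓ:ℝ)⁻¹ • a)) := by
          rw [smul_smul, inv_mul_cancel₀ hT, one_smul]
        rw [hneg, hTx, Finset.smul_sum]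
        refine Finset.sum_congr rfl fun w hw => ?_
        simp only [smul_smul, div_eq_inv_mul]
    have ht : t = 0 := by
      rcases mul_eq_zero.1 hT with h | h
      · exact h
      · exact absurd h hℓ0
    refine ⟨?_, ht⟩
    rw [hT, zero_smul, add_zero] at h1
    rw [ht, zero_mul, add_zero] at h2
    rcases Set.mem_insert_iff.1 hΔ with hΔe | hΔf
    · intro w hw; rw [hΔe] at hw; simp at hw
    · have hai := K.indep hΔf
      rw [affineIndependent_iff] at hai
      have hz := hai Finset.univ (fun i => c (i : Fin d → ℝ) * q)
        (by rw [Finset.sum_coe_sort Δ (fun w => c w * q)]; exact h2)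
        (by rw [Finset.sum_coe_sort Δ (fun w => (c w * q) • w)]; exact h1)
      intro w hw
      have hcq : c w * q = 0 := hz ⟨w, hw⟩ (Finset.mem_univ _)
      rcases mul_eq_zero.1 hcq with h | h
      · exact h
      · exact absurd h hq0
  -- The candidate solution.
  set μf : (Fin d → ℝ) → ℕ := fun w =>
    if w ∈ Δ then (if (∃ n : ℤ, lam w = (n:ℝ)) then (⌊lam w⌋ - 1).toNat else ⌊lam w⌋.toNat)
    else 0 with hμf
  -- coefficient identity
  have hcoef : ∀ w ∈ Δ, lam w =
      Int.fract (lam w) + (if (∃ n : ℤ, lam w = (n:ℝ)) then (1:ℝ) else 0) + ((μf w : ℕ) : ℝ) := by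
    intro w hw
    rw [hμf]
    simp only [if_pos hw]
    by_cases h : ∃ n : ℤ, lam w = (n:ℝ)
    · obtain ⟨n, hn⟩ := h
      have hn1 : 1 ≤ n := by
        have h0 : (0:ℝ) < (n:ℝ) := hn ▸ hpos w hw
        have : 0 < n := by exact_mod_cast h0
        omega
      have hcast : (((n - 1).toNat : ℕ) : ℝ) = (n:ℝ) - 1 := by
        have h' : ((n-1).toNat : ℤ) = n - 1 := Int.toNat_of_nonneg (by omega)
        rw [← Int.cast_natCast, h']
        push_cast
        ring
      rw [if_pos ⟨n, hn⟩, if_pos ⟨n, hn⟩, hn, Int.fract_intCast, Int.floor_intCast, hcast]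
      ring
    · rw [if_neg h, if_neg h]
      have hf0 : 0 ≤ ⌊lam w⌋ := Int.floor_nonneg.2 (hpos w hw).le
      have hcast : ((⌊lam w⌋.toNat : ℕ) : ℝ) = ((⌊lam w⌋ : ℤ) : ℝ) := by
        rw [← Int.cast_natCast, Int.toNat_of_nonneg hf0]
      rw [hcast, add_zero, add_comm]
      exact (Int.floor_add_fract (lam w)).symm
  have hAeq : lamA • ((a, (ℓ:ℝ)) : (Fin d → ℝ) × ℝ) =
      Int.fract lamA • (a, (ℓ:ℝ)) + ((⌊lamA⌋.toNat : ℕ) : ℝ) • (a, (ℓ:ℝ)) := by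
    rw [← add_smul]
    congr 1
    have hcast : ((⌊lamA⌋.toNat : ℕ) : ℝ) = ((⌊lamA⌋ : ℤ) : ℝ) := by
      rw [← Int.cast_natCast, Int.toNat_of_nonneg (Int.floor_nonneg.2 hA)]
    rw [hcast, Int.fract_add_floor]
  have hfilter : (∑ w ∈ Δ.filter (fun w => ∃ n : ℤ, lam w = (n:ℝ)), rayGen q w)
      = ∑ w ∈ Δ, (if (∃ n : ℤ, lam w = (n:ℝ)) then (1:ℝ) else 0) • rayGen q w := by
    rw [Finset.sum_filter]
    exact Finset.sum_congr rfl fun w _ => by split <;> simp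
  have hmain : (∑ w ∈ Δ, lam w • rayGen q w) = (∑ w ∈ Δ, Int.fract (lam w) • rayGen q w)
      + (∑ w ∈ Δ, (if (∃ n : ℤ, lam w = (n:ℝ)) then (1:ℝ) else 0) • rayGen q w)
      + (∑ w ∈ Δ, ((μf w : ℕ) : ℝ) • rayGen q w) := by
    rw [← Finset.sum_add_distrib, ← Finset.sum_add_distrib]
    refine Finset.sum_congr rfl fun w hw => ?_
    rw [← add_smul, ← add_smul]
    exact congrArg (· • rayGen q w) (hcoef w hw)
  have heq₀ : v = ((∑ w ∈ Δ, Int.fract (lam w) • rayGen q w) + Int.fract lamA • (a, (ℓ : ℝ)))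
      + (∑ w ∈ Δ.filter fun w => ∃ n : ℤ, lam w = (n : ℝ), rayGen q w)
      + (∑ w ∈ Δ, ((μf w : ℕ) : ℝ) • rayGen q w)
      + ((⌊lamA⌋.toNat : ℕ) : ℝ) • (a, (ℓ : ℝ)) := by
    rw [hfilter, hv, hmain, hAeq]
    abel
  refine ⟨(μf, ⌊lamA⌋.toNat), ⟨fun w hw => if_neg hw, heq₀⟩, ?_⟩
  rintro μ' ⟨h0', heq'⟩
  have hdiff0 : (∑ w ∈ Δ, (((μ'.1 w : ℝ)) - ((μf w : ℕ) : ℝ)) • rayGen q w)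
      + (((μ'.2 : ℝ) - ((⌊lamA⌋.toNat : ℕ) : ℝ))) • ((a, (ℓ:ℝ)) : (Fin d → ℝ) × ℝ) = 0 := by
    have expand : (∑ w ∈ Δ, (((μ'.1 w : ℝ)) - ((μf w : ℕ) : ℝ)) • rayGen q w)
        + (((μ'.2 : ℝ) - ((⌊lamA⌋.toNat : ℕ) : ℝ))) • ((a, (ℓ:ℝ)) : (Fin d → ℝ) × ℝ)
        = (((∑ w ∈ Δ, Int.fract (lam w) • rayGen q w) + Int.fract lamA • (a, (ℓ : ℝ)))
          + (∑ w ∈ Δ.filter fun w => ∃ n : ℤ, lam w = (n : ℝ), rayGen q w)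
          + (∑ w ∈ Δ, ((μ'.1 w : ℝ)) • rayGen q w) + (μ'.2 : ℝ) • (a, (ℓ : ℝ)))
          - (((∑ w ∈ Δ, Int.fract (lam w) • rayGen q w) + Int.fract lamA • (a, (ℓ : ℝ)))
          + (∑ w ∈ Δ.filter fun w => ∃ n : ℤ, lam w = (n : ℝ), rayGen q w)
          + (∑ w ∈ Δ, ((μf w : ℕ) : ℝ) • rayGen q w)
          + ((⌊lamA⌋.toNat : ℕ) : ℝ) • (a, (ℓ : ℝ))) := by
      simp only [sub_smul, Finset.sum_sub_distrib]
      abel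
    rw [expand]
    exact sub_eq_zero.2 (heq'.symm.trans heq₀)
  obtain ⟨hcz, htz⟩ := key _ _ hdiff0
  have hsnd : μ'.2 = ⌊lamA⌋.toNat := by
    have : (μ'.2 : ℝ) = ((⌊lamA⌋.toNat : ℕ) : ℝ) := sub_eq_zero.1 htz
    exact_mod_cast this
  have hfst : μ'.1 = μf := by
    funext w
    by_cases hw : w ∈ Δ
    · have : (μ'.1 w : ℝ) = ((μf w : ℕ) : ℝ) := sub_eq_zero.1 (hcz w hw)
      exact_mod_cast this
    · rw [h0' w hw, hμf]
      simp [hw]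
  exact Prod.ext hfst hsnd

end RationalEhrhart
end

section
/- Let L = 2k+1 be an odd positive integer and let W = {(1,−L,L), (2,−L,L)} ⊂ ℤ^3. Then the integer points of box(W) = {λ_1(1,−L,L) + λ_2(2,−L,L) : 0 < λ_1, λ_2 < 1} are exactly the points (1, j−L, L−j) for j = 1, …, k and (2, −L−j, L+j) for j = 1, …, k; consequently the box polynomial is B(W;z) = Σ_{i=L−k}^{L−1} z^i + Σ_{i=L+1}^{L+k} z^i. -/
open scoped BigOperators

/-- A point of `ℝ^m` is a lattice point if all its coordinates are integers. -/
def IsLatticePt {m : ℕ} (v : Fin m → ℝ) : Prop := ∀ i, ∃ n : ℤ, v i = (n : ℝ)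

/-- The open parallelepiped spanned by two vectors `w₁, w₂ ∈ ℝ³`. -/
def box2 (w₁ w₂ : Fin 3 → ℝ) : Set (Fin 3 → ℝ) :=
  {p | ∃ l₁ l₂ : ℝ, (0 < l₁ ∧ l₁ < 1) ∧ (0 < l₂ ∧ l₂ < 1) ∧ p = l₁ • w₁ + l₂ • w₂}

/-- Let `L = 2k+1` be an odd positive integer and `W = {(1,−L,L), (2,−L,L)} ⊂ ℤ³`.
Then the integer points of `box(W)` are exactly the points `(1, j−L, L−j)` for
`j = 1, …, k` and `(2, −L−j, L+j)` for `j = 1, …, k`; consequently the box polynomial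
is `B(W;z) = ∑_{i=L−k}^{L−1} z^i + ∑_{i=L+1}^{L+k} z^i`. -/
theorem box_polynomial_F1 (k L : ℕ) (hL : L = 2 * k + 1) :
    ({p | p ∈ box2 ![(1 : ℝ), -(L : ℝ), (L : ℝ)] ![(2 : ℝ), -(L : ℝ), (L : ℝ)] ∧
        IsLatticePt p}
      = {p | ∃ j : ℕ, 1 ≤ j ∧ j ≤ k ∧
          (p = ![(1 : ℝ), (j : ℝ) - (L : ℝ), (L : ℝ) - (j : ℝ)] ∨
           p = ![(2 : ℝ), -(L : ℝ) - (j : ℝ), (L : ℝ) + (j : ℝ)])}) ∧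
    (∑ᶠ p ∈ {p | p ∈ box2 ![(1 : ℝ), -(L : ℝ), (L : ℝ)] ![(2 : ℝ), -(L : ℝ), (L : ℝ)] ∧
          IsLatticePt p}, (Polynomial.X : Polynomial ℤ) ^ (⌊p 2⌋.toNat))
      = (∑ i ∈ Finset.Icc (L - k) (L - 1), Polynomial.X ^ i)
        + ∑ i ∈ Finset.Icc (L + 1) (L + k), Polynomial.X ^ i := by
  have hLpos : (0:ℝ) < L := by
    have : 0 < L := by omega
    exact_mod_cast this
  have hset : ({p | p ∈ box2 ![(1 : ℝ), -(L : ℝ), (L : ℝ)] ![(2 : ℝ), -(L : ℝ), (L : ℝ)] ∧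
        IsLatticePt p}
      = {p | ∃ j : ℕ, 1 ≤ j ∧ j ≤ k ∧
          (p = ![(1 : ℝ), (j : ℝ) - (L : ℝ), (L : ℝ) - (j : ℝ)] ∨
           p = ![(2 : ℝ), -(L : ℝ) - (j : ℝ), (L : ℝ) + (j : ℝ)])}) := by
    ext p
    simp only [Set.mem_setOf_eq, box2]
    constructor
    · rintro ⟨⟨l₁, l₂, ⟨h10, h11⟩, ⟨h20, h21⟩, rfl⟩, hlat⟩
      obtain ⟨a, ha⟩ := hlat 0
      obtain ⟨c, hc⟩ := hlat 2
      have ha' : l₁ + 2 * l₂ = (a:ℝ) := by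
        simp only [Pi.add_apply, Pi.smul_apply, smul_eq_mul, Matrix.cons_val_zero] at ha
        linarith
      have hc' : (l₁ + l₂) * L = (c:ℝ) := by
        simp only [Pi.add_apply, Pi.smul_apply, smul_eq_mul, Matrix.cons_val_two,
          Matrix.tail_cons, Matrix.head_cons] at hc
        linear_combination hc
      have ha0 : (0:ℝ) < (a:ℝ) := by linarith
      have ha3 : (a:ℝ) < (3:ℝ) := by linarith
      have haZ1 : 0 < a := by exact_mod_cast ha0
      have haZ2 : a < 3 := by exact_mod_cast ha3
      have ha12 : a = 1 ∨ a = 2 := by omega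
      rcases ha12 with rfl | rfl
      · -- first coordinate 1
        have ha'' : l₁ + 2 * l₂ = 1 := by push_cast at ha'; linarith
        have hcu : (c:ℝ) < L := by nlinarith [mul_pos h20 hLpos]
        have hcl : (L:ℝ) < 2 * c := by nlinarith [mul_pos h10 hLpos]
        have hcuZ : c < (L:ℤ) := by exact_mod_cast hcu
        have hclZ : (L:ℤ) < 2 * c := by exact_mod_cast hcl
        refine ⟨((L:ℤ) - c).toNat, by omega, by omega, Or.inl ?_⟩
        have hjR : ((((L:ℤ) - c).toNat : ℕ) : ℝ) = (L:ℝ) - (c:ℝ) := by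
          have h1 : ((((L:ℤ) - c).toNat : ℕ) : ℤ) = (L:ℤ) - c := by omega
          exact_mod_cast congrArg (fun x : ℤ => (x:ℝ)) h1
        funext i
        fin_cases i
        · show l₁ * (1:ℝ) + l₂ * 2 = 1
          linarith
        · show l₁ * (-(L:ℝ)) + l₂ * (-(L:ℝ)) = _ - _
          linear_combination (-1:ℝ) * hc' - hjR
        · show l₁ * (L:ℝ) + l₂ * (L:ℝ) = _ - _
          linear_combination hc' + hjR
      · -- first coordinate 2
        have ha'' : l₁ + 2 * l₂ = 2 := by push_cast at ha'; linarith
        have hcu : 2 * (c:ℝ) < 3 * L := by nlinarith [mul_pos h10 hLpos]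
        have hcl : (L:ℝ) < c := by nlinarith [mul_pos (sub_pos.2 h21) hLpos]
        have hcuZ : 2 * c < 3 * (L:ℤ) := by exact_mod_cast hcu
        have hclZ : (L:ℤ) < c := by exact_mod_cast hcl
        refine ⟨(c - (L:ℤ)).toNat, by omega, by omega, Or.inr ?_⟩
        have hjR : (((c - (L:ℤ)).toNat : ℕ) : ℝ) = (c:ℝ) - (L:ℝ) := by
          have h1 : (((c - (L:ℤ)).toNat : ℕ) : ℤ) = c - (L:ℤ) := by omega
          exact_mod_cast congrArg (fun x : ℤ => (x:ℝ)) h1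
        funext i
        fin_cases i
        · show l₁ * (1:ℝ) + l₂ * 2 = 2
          linarith
        · show l₁ * (-(L:ℝ)) + l₂ * (-(L:ℝ)) = _ - _
          linear_combination (-1:ℝ) * hc' + hjR
        · show l₁ * (L:ℝ) + l₂ * (L:ℝ) = _ + _
          linear_combination hc' - hjR
    · rintro ⟨j, hj1, hjk, rfl | rfl⟩
      · have h2jL : 2 * (j:ℝ) < L := by
          have : 2 * j < L := by omega
          exact_mod_cast this
        have hj0 : (0:ℝ) < j := by
          have : 0 < j := by omega
          exact_mod_cast this
        constructor
        · refine ⟨1 - 2 * (j:ℝ) / L, (j:ℝ) / L, ⟨?_, ?_⟩, ⟨?_, ?_⟩, ?_⟩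
          · have : 2 * (j:ℝ) / L < 1 := by rw [div_lt_one hLpos]; linarith
            linarith
          · have : 0 < 2 * (j:ℝ) / L := by positivity
            linarith
          · positivity
          · rw [div_lt_one hLpos]; linarith
          · funext i
            fin_cases i <;>
              simp only [Fin.zero_eta, Fin.mk_one, Fin.reduceFinMk, Pi.add_apply, Pi.smul_apply, smul_eq_mul, Matrix.cons_val_zero,
                Matrix.cons_val_one, Matrix.head_cons, Matrix.cons_val_two,
                Matrix.tail_cons] <;>
              field_simp <;> ring
        · intro i
          fin_cases i
          · exact ⟨1, by simp⟩
          · exact ⟨(j:ℤ) - (L:ℤ), by push_cast; simp⟩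
          · exact ⟨(L:ℤ) - (j:ℤ), by push_cast; simp⟩
      · have h2jL : 2 * (j:ℝ) < L := by
          have : 2 * j < L := by omega
          exact_mod_cast this
        have hj0 : (0:ℝ) < j := by
          have : 0 < j := by omega
          exact_mod_cast this
        constructor
        · refine ⟨2 * (j:ℝ) / L, 1 - (j:ℝ) / L, ⟨?_, ?_⟩, ⟨?_, ?_⟩, ?_⟩
          · positivity
          · rw [div_lt_one hLpos]; linarith
          · have : (j:ℝ) / L < 1 := by rw [div_lt_one hLpos]; linarith
            linarith
          · have : 0 < (j:ℝ) / L := by positivity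
            linarith
          · funext i
            fin_cases i <;>
              simp only [Fin.zero_eta, Fin.mk_one, Fin.reduceFinMk, Pi.add_apply, Pi.smul_apply, smul_eq_mul, Matrix.cons_val_zero,
                Matrix.cons_val_one, Matrix.head_cons, Matrix.cons_val_two,
                Matrix.tail_cons] <;>
              field_simp <;> ring
        · intro i
          fin_cases i
          · exact ⟨2, by simp⟩
          · exact ⟨-(L:ℤ) - (j:ℤ), by push_cast; simp⟩
          · exact ⟨(L:ℤ) + (j:ℤ), by push_cast; simp⟩
  refine ⟨hset, ?_⟩
  rw [hset]
  have hcoe : {p | ∃ j : ℕ, 1 ≤ j ∧ j ≤ k ∧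
          (p = ![(1 : ℝ), (j : ℝ) - (L : ℝ), (L : ℝ) - (j : ℝ)] ∨
           p = ![(2 : ℝ), -(L : ℝ) - (j : ℝ), (L : ℝ) + (j : ℝ)])}
      = (↑((Finset.Icc 1 k).image (fun j : ℕ => ![(1:ℝ), (j:ℝ) - L, (L:ℝ) - j]) ∪
         (Finset.Icc 1 k).image (fun j : ℕ => ![(2:ℝ), -(L:ℝ) - j, (L:ℝ) + j])) :
           Set (Fin 3 → ℝ)) := by
    ext p
    simp only [Set.mem_setOf_eq, Finset.coe_union, Set.mem_union, Finset.coe_image,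
      Set.mem_image, Finset.mem_coe, Finset.mem_Icc]
    constructor
    · rintro ⟨j, h1, h2, h | h⟩
      · exact Or.inl ⟨j, ⟨h1, h2⟩, h.symm⟩
      · exact Or.inr ⟨j, ⟨h1, h2⟩, h.symm⟩
    · rintro (⟨j, ⟨h1, h2⟩, h⟩ | ⟨j, ⟨h1, h2⟩, h⟩)
      · exact ⟨j, h1, h2, Or.inl h.symm⟩
      · exact ⟨j, h1, h2, Or.inr h.symm⟩
  rw [hcoe, finsum_mem_coe_finset]
  have hdisj : Disjoint
      ((Finset.Icc 1 k).image (fun j : ℕ => ![(1:ℝ), (j:ℝ) - L, (L:ℝ) - j]))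
      ((Finset.Icc 1 k).image (fun j : ℕ => ![(2:ℝ), -(L:ℝ) - j, (L:ℝ) + j])) := by
    rw [Finset.disjoint_left]
    rintro p hp hq
    simp only [Finset.mem_image] at hp hq
    obtain ⟨x, -, hx⟩ := hp
    obtain ⟨y, -, hy⟩ := hq
    have h0 := congrFun (hx.trans hy.symm) 0
    norm_num at h0
  rw [Finset.sum_union hdisj]
  have hinj1 : ∀ x ∈ Finset.Icc 1 k, ∀ y ∈ Finset.Icc 1 k,
      (fun j : ℕ => ![(1:ℝ), (j:ℝ) - L, (L:ℝ) - j]) x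
        = (fun j : ℕ => ![(1:ℝ), (j:ℝ) - L, (L:ℝ) - j]) y → x = y := by
    intro x _ y _ h
    have h1 := congrFun h 1
    simp only [Matrix.cons_val_one, Matrix.head_cons, Matrix.cons_val_zero] at h1
    have : (x:ℝ) = y := by linarith
    exact_mod_cast this
  have hinj2 : ∀ x ∈ Finset.Icc 1 k, ∀ y ∈ Finset.Icc 1 k,
      (fun j : ℕ => ![(2:ℝ), -(L:ℝ) - j, (L:ℝ) + j]) x
        = (fun j : ℕ => ![(2:ℝ), -(L:ℝ) - j, (L:ℝ) + j]) y → x = y := by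
    intro x _ y _ h
    have h1 := congrFun h 1
    simp only [Matrix.cons_val_one, Matrix.head_cons, Matrix.cons_val_zero] at h1
    have : (x:ℝ) = y := by linarith
    exact_mod_cast this
  rw [Finset.sum_image hinj1, Finset.sum_image hinj2]
  congr 1
  · refine Finset.sum_nbij' (fun j => L - j) (fun i => L - i)
      (fun a ha => ?_) (fun a ha => ?_) (fun a ha => ?_) (fun a ha => ?_) (fun a ha => ?_)
    · simp only [Finset.mem_Icc] at *; omega
    · simp only [Finset.mem_Icc] at *; omega
    · simp only [Finset.mem_Icc] at *; omega
    · simp only [Finset.mem_Icc] at *; omega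
    · simp only [Finset.mem_Icc] at ha
      have haL : a ≤ L := by omega
      have h2 : ((L:ℝ) - (a:ℝ)) = ((L - a : ℕ) : ℝ) := by
        rw [Nat.cast_sub haL]
      congr 1
      show (⌊(![(1:ℝ), (a:ℝ) - L, (L:ℝ) - a]) 2⌋).toNat = L - a
      show (⌊(L:ℝ) - (a:ℝ)⌋).toNat = L - a
      rw [h2]
      simp
  · refine Finset.sum_nbij' (fun j => L + j) (fun i => i - L)
      (fun a ha => ?_) (fun a ha => ?_) (fun a ha => ?_) (fun a ha => ?_) (fun a ha => ?_)
    · simp only [Finset.mem_Icc] at *; omega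
    · simp only [Finset.mem_Icc] at *; omega
    · simp only [Finset.mem_Icc] at *; omega
    · simp only [Finset.mem_Icc] at *; omega
    · have h2 : ((L:ℝ) + (a:ℝ)) = ((L + a : ℕ) : ℝ) := by push_cast; ring
      congr 1
      show (⌊(![(2:ℝ), -(L:ℝ) - a, (L:ℝ) + a]) 2⌋).toNat = L + a
      show (⌊(L:ℝ) + (a:ℝ)⌋).toNat = L + a
      rw [h2]
      simp
      omega
end
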